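/- arXiv:1907.08655 — 12 statements merged into one kernel-verified Lean document; each statement's English description precedes it below -/
import Mathlib

section
/- The map f(x) = λx + δ for 0 ≤ x < η and f(x) = μ(λx + δ − 1) for η ≤ x < 1, where η = (1−δ)/λ, is injective on [0,1), given 0 < λ < 1, μ > 0, and 1 − λ < δ < d where d = 1 if λμ < 1 and d = μ(1−λ)/(μ−1) if λμ ≥ 1. -/
theorem stmt0 (lam mu del : ℝ) (hlam0 : 0 < lam) (hlam1 : lam < 1) (hmu : 0 < mu)
    (hdel1 : 1 - lam < del)
    (hdel2 : del < if lam * mu < 1 then 1 else mu * (1 - lam) / (mu - 1)) :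
    Set.InjOn
      (fun x : ℝ => if x < (1 - del) / lam then lam * x + del else mu * (lam * x + del - 1))
      (Set.Ico 0 1) := by
  have hkey : mu * (lam + del - 1) ≤ del := by
    split_ifs at hdel2 with h
    · rcases le_or_gt mu 1 with hm | hm
      · nlinarith
      · nlinarith
    · push_neg at h
      have hm : 1 < mu := by nlinarith
      rw [lt_div_iff₀ (by linarith : (0:ℝ) < mu - 1)] at hdel2
      nlinarith
  intro x hx y hy h
  obtain ⟨hx0, hx1⟩ := hx
  obtain ⟨hy0, hy1⟩ := hy
  simp only at h
  split_ifs at h with h1 h2 h2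
  · nlinarith
  · exfalso
    have hy2 : mu * (lam * y + del - 1) < mu * (lam + del - 1) :=
      mul_lt_mul_of_pos_left (by nlinarith) hmu
    nlinarith
  · exfalso
    have hx2 : mu * (lam * x + del - 1) < mu * (lam + del - 1) :=
      mul_lt_mul_of_pos_left (by nlinarith) hmu
    nlinarith
  · have h' := mul_left_cancel₀ (ne_of_gt hmu) h
    have : lam * x = lam * y := by linarith
    exact mul_left_cancel₀ (ne_of_gt hlam0) this
end

section
/- Let 0 < λ < 1, μ > 0, and 0 < ρ < r_{λ,μ}, where r_{λ,μ} = 1 if λμ < 1 and r_{λ,μ} = −log λ / log μ if λμ ≥ 1. Then the double series Ψ_ρ(λ,μ) = Σ_{k≥1} Σ_{1≤h≤kρ} λ^k μ^h satisfies Σ_{k≥1} (⌊(k+1)ρ⌋ − ⌊kρ⌋) λ^k μ^{⌊kρ⌋} = ((1−λ)/(λμ)) · Ψ_ρ(λ,μ). -/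
/-- The Hecke–Mahler series Ψ_ρ(λ,μ) = Σ_{k≥1} Σ_{1≤h≤kρ} λ^k μ^h. -/
noncomputable def Psi (lam mu rho : ℝ) : ℝ :=
  ∑' k : ℕ, ∑ h ∈ Finset.Icc 1 (⌊((k : ℝ) + 1) * rho⌋.toNat), lam ^ (k + 1) * mu ^ h

/-- σ(λ,μ,ρ) = Σ_{k≥1} (⌊(k+1)ρ⌋ − ⌊kρ⌋) λ^k μ^{⌊kρ⌋}. -/
noncomputable def sigmaFn (lam mu rho : ℝ) : ℝ :=
  ∑' k : ℕ, ((⌊((k : ℝ) + 2) * rho⌋ - ⌊((k : ℝ) + 1) * rho⌋ : ℤ) : ℝ) *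
    lam ^ (k + 1) * mu ^ ⌊((k : ℝ) + 1) * rho⌋

theorem stmt3 (lam mu rho : ℝ) (hlam0 : 0 < lam) (hlam1 : lam < 1) (hmu : 0 < mu)
    (hrho0 : 0 < rho)
    (hrho1 : rho < if lam * mu < 1 then 1 else -Real.log lam / Real.log mu) :
    sigmaFn lam mu rho = (1 - lam) / (lam * mu) * Psi lam mu rho := by
  -- ρ < 1 in all cases
  have hrho1' : rho < 1 := by
    by_cases hc : lam * mu < 1
    · simpa [hc] using hrho1
    · rw [if_neg hc] at hrho1
      push_neg at hc
      have hmu1 : 1 < mu := by nlinarith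
      have hlogmu : 0 < Real.log mu := Real.log_pos hmu1
      have hloglam : -Real.log lam ≤ Real.log mu := by
        have h1 : Real.log lam + Real.log mu ≥ 0 := by
          have h2 : Real.log (lam * mu) ≥ Real.log 1 := by
            exact Real.log_le_log (by norm_num) hc
          rwa [Real.log_mul (ne_of_gt hlam0) (ne_of_gt hmu), Real.log_one] at h2
        linarith
      calc rho < -Real.log lam / Real.log mu := hrho1
        _ ≤ 1 := by rw [div_le_one hlogmu]; linarith
  -- the geometric ratio
  set M : ℝ := max mu 1 with hM
  have hM1 : 1 ≤ M := le_max_right _ _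
  have hM0 : 0 < M := lt_of_lt_of_le one_pos hM1
  set q : ℝ := lam * M ^ rho with hq
  have hq0 : 0 ≤ q := by positivity
  have hq1 : q < 1 := by
    rcases le_or_gt mu 1 with hmu1 | hmu1
    · have : M = 1 := max_eq_right hmu1
      rw [hq, this, Real.one_rpow, mul_one]; exact hlam1
    · have hMmu : M = mu := max_eq_left (le_of_lt hmu1)
      rw [hq, hMmu]
      by_cases hc : lam * mu < 1
      · have : mu ^ rho ≤ mu ^ (1:ℝ) :=
          Real.rpow_le_rpow_of_exponent_le (le_of_lt hmu1) (le_of_lt hrho1')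
        rw [Real.rpow_one] at this
        nlinarith [Real.rpow_pos_of_pos hmu rho]
      · rw [if_neg hc] at hrho1
        have hlogmu : 0 < Real.log mu := Real.log_pos hmu1
        have h2 : rho * Real.log mu < -Real.log lam := by
          rw [← lt_div_iff₀ hlogmu] at *; exact hrho1
        have h3 : mu ^ rho < Real.exp (-Real.log lam) := by
          rw [Real.rpow_def_of_pos hmu]
          exact Real.exp_lt_exp.mpr (by rw [mul_comm] at h2; exact h2)
        rw [Real.exp_neg, Real.exp_log hlam0] at h3
        calc lam * mu ^ rho < lam * lam⁻¹ := by
              exact mul_lt_mul_of_pos_left h3 hlam0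
          _ = 1 := mul_inv_cancel₀ (ne_of_gt hlam0)
  -- notation
  set m : ℕ → ℕ := fun k => (⌊((k : ℝ) + 1) * rho⌋).toNat with hm
  have hfloor_nonneg : ∀ k : ℕ, (0:ℤ) ≤ ⌊((k : ℝ) + 1) * rho⌋ := fun k =>
    Int.floor_nonneg.mpr (by positivity)
  have hm_cast : ∀ k : ℕ, ((m k : ℝ)) = (⌊((k : ℝ) + 1) * rho⌋ : ℝ) := by
    intro k
    rw [hm]
    exact_mod_cast congrArg (fun z : ℤ => (z : ℝ)) (Int.toNat_of_nonneg (hfloor_nonneg k))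
  have hm_le : ∀ k : ℕ, (m k : ℝ) ≤ ((k : ℝ) + 1) * rho := by
    intro k; rw [hm_cast k]; exact Int.floor_le _
  -- the summand of Psi
  set f : ℕ → ℝ := fun k => ∑ h ∈ Finset.Icc 1 (m k), lam ^ (k + 1) * mu ^ h with hf
  have hPsi : Psi lam mu rho = ∑' k, f k := rfl
  -- bound on f
  have hf_bound : ∀ k : ℕ, |f k| ≤ ((k:ℝ) + 1) * q ^ (k + 1) := by
    intro k
    have hterm : ∀ h ∈ Finset.Icc 1 (m k), lam ^ (k+1) * mu ^ h ≤ lam ^ (k+1) * M ^ (m k) := by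
      intro h hh
      rw [Finset.mem_Icc] at hh
      have h1 : mu ^ h ≤ M ^ h := pow_le_pow_left₀ (le_of_lt hmu) (le_max_left _ _) h
      have h2 : M ^ h ≤ M ^ (m k) := pow_le_pow_right₀ hM1 hh.2
      have := le_trans h1 h2
      nlinarith [pow_pos hlam0 (k+1)]
    have hfk_nonneg : 0 ≤ f k := Finset.sum_nonneg fun h _ => by positivity
    rw [abs_of_nonneg hfk_nonneg]
    have h3 : f k ≤ (m k : ℝ) * (lam ^ (k+1) * M ^ (m k)) := by
      calc f k ≤ ∑ _h ∈ Finset.Icc 1 (m k), lam ^ (k+1) * M ^ (m k) :=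
            Finset.sum_le_sum hterm
        _ = (m k : ℝ) * (lam ^ (k+1) * M ^ (m k)) := by
            rw [Finset.sum_const, Nat.card_Icc]
            simp [nsmul_eq_mul]
    have hMpow : lam ^ (k+1) * M ^ (m k) ≤ q ^ (k+1) := by
      have h4 : (M : ℝ) ^ (m k) = M ^ ((m k : ℝ)) := (Real.rpow_natCast M (m k)).symm
      have h5 : M ^ ((m k : ℝ)) ≤ M ^ (((k:ℝ)+1) * rho) :=
        Real.rpow_le_rpow_of_exponent_le hM1 (hm_le k)
      have h6 : M ^ (((k:ℝ)+1) * rho) = (M ^ rho) ^ (k+1) := by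
        rw [mul_comm, Real.rpow_mul (le_of_lt hM0)]
        rw [← Real.rpow_natCast (M ^ rho) (k+1)]
        push_cast
        ring_nf
      have h7 : M ^ (m k) ≤ (M ^ rho) ^ (k+1) := by rw [h4]; rw [h6] at h5; exact h5
      calc lam ^ (k+1) * M ^ (m k) ≤ lam ^ (k+1) * (M ^ rho) ^ (k+1) := by
            have := pow_pos hlam0 (k+1); nlinarith
        _ = q ^ (k+1) := by rw [hq, mul_pow]
    have hmk : (m k : ℝ) ≤ (k:ℝ) + 1 := le_trans (hm_le k) (by nlinarith)
    calc f k ≤ (m k : ℝ) * (lam ^ (k+1) * M ^ (m k)) := h3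
      _ ≤ ((k:ℝ)+1) * q ^ (k+1) := by
          have hq' : 0 ≤ lam ^ (k+1) * M ^ (m k) := by positivity
          have := mul_le_mul hmk hMpow hq' (by positivity)
          linarith
  -- summability
  have hsum_aux : Summable (fun k : ℕ => ((k:ℝ)+1) * q ^ (k+1)) := by
    have h1 : Summable (fun k : ℕ => (k:ℝ) * q ^ k) := by
      simpa using summable_pow_mul_geometric_of_norm_lt_one 1
        (r := q) (by rwa [Real.norm_eq_abs, abs_of_nonneg hq0])
    have h2 : Summable (fun k : ℕ => ((k:ℝ)+1) * q ^ (k+1)) := by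
      have := (summable_nat_add_iff 1).mpr h1
      simpa using this
    exact h2
  have hsum_f : Summable f :=
    Summable.of_abs (hsum_aux.of_nonneg_of_le (fun k => abs_nonneg _) hf_bound)
  have hsum_fs : Summable (fun k => f (k + 1)) := by
    have := (summable_nat_add_iff 1).mpr hsum_f
    simpa using this
  -- f 0 = 0
  have hm0 : m 0 = 0 := by
    rw [hm]
    simp only [Nat.cast_zero, zero_add, one_mul]
    rw [Int.floor_eq_zero_iff.mpr (by constructor <;> simp_all <;> linarith)]
    rfl
  have hf0 : f 0 = 0 := by rw [hf]; simp [hm0]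
  -- gap lemma : m (k+1) = m k or m k + 1
  have hgap : ∀ k : ℕ, ⌊(((k:ℝ)+1) + 1) * rho⌋ = ⌊((k:ℝ)+1) * rho⌋ ∨
      ⌊(((k:ℝ)+1) + 1) * rho⌋ = ⌊((k:ℝ)+1) * rho⌋ + 1 := by
    intro k
    set a : ℝ := ((k:ℝ)+1) * rho
    have h1 : ⌊a⌋ ≤ ⌊a + rho⌋ := Int.floor_le_floor (by linarith)
    have h2 : ⌊a + rho⌋ ≤ ⌊a⌋ + 1 := by
      have h3 : ⌊a + rho⌋ < ⌊a⌋ + 2 := by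
        apply Int.floor_lt.mpr
        push_cast
        have := Int.lt_floor_add_one a
        linarith
      omega
    have he : ((k:ℝ)+1+1) * rho = a + rho := by ring
    rw [he]
    omega
  -- key termwise identity
  have hkey : ∀ k : ℕ,
      lam * mu * (((⌊((k : ℝ) + 2) * rho⌋ - ⌊((k : ℝ) + 1) * rho⌋ : ℤ) : ℝ) *
        lam ^ (k + 1) * mu ^ ⌊((k : ℝ) + 1) * rho⌋) = f (k + 1) - lam * f k := by
    intro k
    have hcast2 : ((k:ℝ) + 2) = (((k+1:ℕ) : ℝ) + 1) := by push_cast; ring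
    have hzpow : mu ^ ⌊((k : ℝ) + 1) * rho⌋ = mu ^ (m k) := by
      rw [show ⌊((k : ℝ) + 1) * rho⌋ = ((m k : ℕ) : ℤ) from (Int.toNat_of_nonneg (hfloor_nonneg k)).symm,
        zpow_natCast]
    have hlamf : lam * f k = ∑ h ∈ Finset.Icc 1 (m k), lam ^ (k + 2) * mu ^ h := by
      rw [hf, Finset.mul_sum]
      exact Finset.sum_congr rfl fun h _ => by ring
    have hf1 : f (k+1) = ∑ h ∈ Finset.Icc 1 (m (k+1)), lam ^ (k + 2) * mu ^ h := rfl
    rcases hgap k with hg | hg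
    · -- no jump
      have hmm : m (k+1) = m k := by
        rw [hm]; simp only []
        rw [show (((k+1:ℕ):ℝ) + 1) = ((k:ℝ) + 1 + 1) by push_cast; ring, hg]
      have hcoef : (⌊((k : ℝ) + 2) * rho⌋ - ⌊((k : ℝ) + 1) * rho⌋ : ℤ) = 0 := by
        rw [hcast2]
        push_cast
        rw [show (((k:ℕ):ℝ) + 1 + 1) = ((k:ℝ) + 1 + 1) by push_cast; ring] at *
        omega
      rw [hcoef, hf1, hmm, ← hlamf]
      push_cast
      ring
    · -- jump by one
      have hmm : m (k+1) = m k + 1 := by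
        rw [hm]; simp only []
        rw [show (((k+1:ℕ):ℝ) + 1) = ((k:ℝ) + 1 + 1) by push_cast; ring, hg]
        have := hfloor_nonneg k
        omega
      have hcoef : (⌊((k : ℝ) + 2) * rho⌋ - ⌊((k : ℝ) + 1) * rho⌋ : ℤ) = 1 := by
        rw [hcast2]
        rw [show (((k+1:ℕ):ℝ) + 1) = ((k:ℝ) + 1 + 1) by push_cast; ring, hg]
        omega
      have hsplit : ∑ h ∈ Finset.Icc 1 (m k + 1), lam ^ (k + 2) * mu ^ h
          = (∑ h ∈ Finset.Icc 1 (m k), lam ^ (k + 2) * mu ^ h) + lam ^ (k+2) * mu ^ (m k + 1) := by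
        exact Finset.sum_Icc_succ_top (by omega) _
      rw [hcoef, hf1, hmm, hsplit, ← hlamf, hzpow]
      push_cast
      ring
  -- assemble
  have hshift : ∑' k, f k = ∑' k, f (k + 1) := by
    rw [Summable.tsum_eq_zero_add hsum_f, hf0, zero_add]
  have hsub : ∑' k, (f (k+1) - lam * f k) = (1 - lam) * Psi lam mu rho := by
    rw [Summable.tsum_sub hsum_fs (hsum_f.mul_left lam), tsum_mul_left, hPsi, ← hshift]
    ring
  have hmain : lam * mu * sigmaFn lam mu rho = (1 - lam) * Psi lam mu rho := by
    rw [sigmaFn, ← tsum_mul_left]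
    rw [tsum_congr hkey]
    exact hsub
  have hne : lam * mu ≠ 0 := by positivity
  field_simp at hmain ⊢
  linarith [hmain]
end

section
/- For 0 < λ < 1, μ > 0 and 0 < ρ < r_{λ,μ} irrational, the identity Ψ_ρ(λ,μ) = (1/(1−λ)) Σ_{h≥1} λ^{⌈h/ρ⌉} μ^h holds, where Ψ_ρ(λ,μ) = Σ_{k≥1} Σ_{1≤h≤kρ} λ^k μ^h. -/
open Finset

set_option maxHeartbeats 1000000 in
theorem stmt4 (lam mu rho : ℝ) (hlam0 : 0 < lam) (hlam1 : lam < 1) (hmu : 0 < mu)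
    (hrho0 : 0 < rho)
    (hrho1 : rho < if lam * mu < 1 then 1 else -Real.log lam / Real.log mu)
    (hirr : Irrational rho) :
    Psi lam mu rho =
      (1 / (1 - lam)) * ∑' h : ℕ, lam ^ ⌈((h : ℝ) + 1) / rho⌉ * mu ^ (h + 1) := by
  set M : ℝ := max mu 1 with hMdef
  have hM1 : (1:ℝ) ≤ M := le_max_right _ _
  have hM0 : (0:ℝ) < M := lt_of_lt_of_le one_pos hM1
  -- r := lam * M ^ rho < 1
  set r : ℝ := lam * M ^ rho with hrdef
  have hr0 : 0 ≤ r := by positivity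
  have hr1 : r < 1 := by
    by_cases hmu1 : mu ≤ 1
    · have hMe : M = 1 := max_eq_right hmu1
      rw [hrdef, hMe, Real.one_rpow, mul_one]; exact hlam1
    · push_neg at hmu1
      have hMe : M = mu := max_eq_left hmu1.le
      rw [hrdef, hMe]
      split_ifs at hrho1 with h
      · have h1 : mu ^ rho < mu ^ (1:ℝ) := Real.rpow_lt_rpow_of_exponent_lt hmu1 hrho1
        rw [Real.rpow_one] at h1
        have hp : 0 < mu ^ rho := Real.rpow_pos_of_pos hmu rho
        nlinarith
      · have hlogmu : 0 < Real.log mu := Real.log_pos hmu1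
        have h2 : rho * Real.log mu < -Real.log lam := (lt_div_iff₀ hlogmu).mp hrho1
        have hpos : 0 < lam * mu ^ rho := by positivity
        have hlog : Real.log (lam * mu ^ rho) < 0 := by
          rw [Real.log_mul (ne_of_gt hlam0) (ne_of_gt (Real.rpow_pos_of_pos hmu rho)),
            Real.log_rpow hmu]
          linarith
        calc lam * mu ^ rho = Real.exp (Real.log (lam * mu ^ rho)) := (Real.exp_log hpos).symm
          _ < Real.exp 0 := Real.exp_lt_exp.mpr hlog
          _ = 1 := Real.exp_zero
  set N : ℕ → ℕ := fun k => (⌊((k:ℝ)+1)*rho⌋).toNat with hNdef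
  have hfl : ∀ k : ℕ, (0:ℤ) ≤ ⌊((k:ℝ)+1)*rho⌋ := fun k =>
    Int.floor_nonneg.mpr (by positivity)
  have hNle : ∀ k : ℕ, (N k : ℝ) ≤ ((k:ℝ)+1)*rho := by
    intro k
    have : ((N k : ℤ) : ℝ) ≤ ((k:ℝ)+1)*rho := by
      rw [hNdef]; simp only []
      rw [Int.toNat_of_nonneg (hfl k)]
      exact Int.floor_le _
    exact_mod_cast this
  have hcond : ∀ k h : ℕ, (h + 1 ≤ N k) ↔ (⌈((h:ℝ)+1)/rho⌉ ≤ (k:ℤ)+1) := by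
    intro k h
    rw [hNdef]
    simp only []
    rw [Int.le_toNat (hfl k), Int.le_floor, Int.ceil_le]
    push_cast
    rw [div_le_iff₀ hrho0]
  set g : ℕ → ℕ → ℝ := fun k h => if h + 1 ≤ N k then lam^(k+1) * mu^(h+1) else 0 with hgdef
  have hg0 : ∀ k h, 0 ≤ g k h := by
    intro k h; rw [hgdef]; dsimp only; split <;> positivity
  have hgz : ∀ k, ∀ h ∉ Finset.range (N k), g k h = 0 := by
    intro k h hh
    rw [Finset.mem_range, not_lt] at hh
    rw [hgdef]; dsimp only; rw [if_neg (by omega)]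
  clear_value N g
  have htsum_fin : ∀ k, ∑' h, g k h = ∑ h ∈ Finset.range (N k), g k h :=
    fun k => tsum_eq_sum (hgz k)
  have hinner : ∀ k, ∑ h ∈ Finset.Icc 1 (N k), lam^(k+1) * mu^h = ∑' h, g k h := by
    intro k
    rw [htsum_fin k, ← Finset.Ico_add_one_right_eq_Icc, Finset.sum_Ico_eq_sum_range]
    apply Finset.sum_congr rfl
    intro i hi
    rw [Finset.mem_range] at hi
    rw [hgdef]; dsimp only; rw [if_pos (by omega), add_comm 1 i]
  -- bound on inner sums
  have hbound : ∀ k, ∑' h, g k h ≤ rho * (((k:ℝ)+1) * r^(k+1)) := by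
    intro k
    rw [htsum_fin k]
    have hle1 : ∀ h ∈ Finset.range (N k), g k h ≤ lam^(k+1) * M^(N k) := by
      intro h hh
      rw [Finset.mem_range] at hh
      rw [hgdef]; dsimp only; rw [if_pos (by omega)]
      have h1 : mu^(h+1) ≤ M^(h+1) := pow_le_pow_left₀ hmu.le (le_max_left _ _) _
      have h2 : M^(h+1) ≤ M^(N k) := pow_le_pow_right₀ hM1 (by omega)
      have := h1.trans h2
      nlinarith [pow_pos hlam0 (k+1)]
    calc ∑ h ∈ Finset.range (N k), g k h
        ≤ ∑ _h ∈ Finset.range (N k), lam^(k+1) * M^(N k) := Finset.sum_le_sum hle1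
      _ = (N k : ℝ) * (lam^(k+1) * M^(N k)) := by rw [Finset.sum_const, Finset.card_range]; ring
      _ ≤ (((k:ℝ)+1)*rho) * (lam^(k+1) * (M^rho)^(k+1)) := by
          have hMN : (M:ℝ)^(N k) ≤ (M^rho)^(k+1) := by
            have e1 : (M:ℝ)^(N k) = M ^ ((N k : ℝ)) := (Real.rpow_natCast M (N k)).symm
            have e2 : ((M:ℝ)^rho)^(k+1) = M ^ (((k:ℝ)+1)*rho) := by
              rw [← Real.rpow_natCast (M^rho) (k+1), ← Real.rpow_mul hM0.le]
              push_cast; ring_nf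
            rw [e1, e2]
            exact Real.rpow_le_rpow_of_exponent_le hM1 (hNle k)
          have hnn : (0:ℝ) ≤ lam^(k+1) := by positivity
          have h3 : lam^(k+1) * M^(N k) ≤ lam^(k+1) * (M^rho)^(k+1) :=
            mul_le_mul_of_nonneg_left hMN hnn
          have h4 : (0:ℝ) ≤ lam^(k+1) * M^(N k) := by
            have : (0:ℝ) < M^(N k) := pow_pos hM0 _
            positivity
          exact mul_le_mul (hNle k) h3 h4 (by positivity)
      _ = rho * (((k:ℝ)+1) * r^(k+1)) := by rw [hrdef, mul_pow]; ring
  have hsummable_bound : Summable (fun k : ℕ => rho * (((k:ℝ)+1) * r^(k+1))) := by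
    apply Summable.mul_left
    have h0 : Summable (fun n : ℕ => (n:ℝ)^1 * r^n) :=
      summable_pow_mul_geometric_of_norm_lt_one 1 (by rwa [Real.norm_eq_abs, abs_of_nonneg hr0])
    have h1 : Summable (fun n : ℕ => (n:ℝ) * r^n) := by simpa using h0
    have h2 := (summable_nat_add_iff 1).mpr h1
    simpa [add_comm] using h2
  have hsum : Summable (fun p : ℕ × ℕ => g p.1 p.2) := by
    rw [summable_prod_of_nonneg (fun p => hg0 p.1 p.2)]
    refine ⟨fun k => summable_of_ne_finset_zero (hgz k), ?_⟩
    exact Summable.of_nonneg_of_le (fun k => tsum_nonneg (hg0 k)) hbound hsummable_bound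
  -- swap
  have hcols : ∀ h : ℕ, Summable (fun k => g k h) := by
    intro h
    refine Summable.of_nonneg_of_le (fun k => hg0 k h)
      (f := fun k => mu^(h+1) * lam^(k+1)) ?_ ?_
    · intro k
      rw [hgdef]; dsimp only
      split
      · exact le_of_eq (mul_comm _ _)
      · positivity
    · apply Summable.mul_left
      exact ((summable_geometric_of_lt_one hlam0.le hlam1).mul_left lam).congr
        (fun k => by rw [← pow_succ'])
  have hswap : ∑' k, ∑' h, g k h = ∑' h, ∑' k, g k h :=
    (Summable.tsum_comm' hsum (fun k => summable_of_ne_finset_zero (hgz k)) hcols).symm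
  -- inner over k
  have hinnerk : ∀ h : ℕ, ∑' k, g k h
      = (1/(1-lam)) * (lam ^ ⌈((h:ℝ)+1)/rho⌉ * mu^(h+1)) := by
    intro h
    have hcpos : (0:ℤ) < ⌈((h:ℝ)+1)/rho⌉ := Int.ceil_pos.mpr (by positivity)
    set m : ℕ := (⌈((h:ℝ)+1)/rho⌉).toNat with hmdef
    have hmz : ((m:ℕ):ℤ) = ⌈((h:ℝ)+1)/rho⌉ := Int.toNat_of_nonneg hcpos.le
    have hm1 : 1 ≤ m := by omega
    clear_value m
    have hgk : ∀ k, g k h = if m ≤ k+1 then lam^(k+1) * mu^(h+1) else 0 := by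
      intro k
      rw [hgdef]; dsimp only
      congr 1
      rw [eq_iff_iff, hcond k h, ← hmz]
      constructor <;> intro hh <;> [exact_mod_cast hh; exact_mod_cast hh]
    have hset : ∑' k, g k h = ∑' k : ℕ, (fun k => if m ≤ k+1 then lam^(k+1) * mu^(h+1) else 0) k :=
      tsum_congr hgk
    rw [hset]
    have hinj : Function.Injective (fun j : ℕ => j + (m-1)) := add_left_injective (m-1)
    have hsupp : Function.support (fun k : ℕ => if m ≤ k+1 then lam^(k+1) * mu^(h+1) else 0)
        ⊆ Set.range (fun j : ℕ => j + (m-1)) := by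
      intro k hk
      simp only [Function.mem_support] at hk
      by_cases hc : m ≤ k + 1
      · exact ⟨k - (m-1), by show k - (m-1) + (m-1) = k; omega⟩
      · exact absurd (if_neg hc) hk
    rw [← Function.Injective.tsum_eq hinj hsupp]
    have heq : ∀ j : ℕ, (if m ≤ (j + (m-1))+1 then lam^((j+(m-1))+1) * mu^(h+1) else 0)
        = lam^m * mu^(h+1) * lam^j := by
      intro j
      rw [if_pos (by omega)]
      have : (j + (m-1)) + 1 = m + j := by omega
      rw [this, pow_add]; ring
    calc ∑' j : ℕ, (if m ≤ (j + (m-1))+1 then lam^((j+(m-1))+1) * mu^(h+1) else 0)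
        = ∑' j : ℕ, lam^m * mu^(h+1) * lam^j := tsum_congr heq
      _ = lam^m * mu^(h+1) * (1-lam)⁻¹ := by
          rw [tsum_mul_left, tsum_geometric_of_lt_one hlam0.le hlam1]
      _ = (1/(1-lam)) * (lam ^ ⌈((h:ℝ)+1)/rho⌉ * mu^(h+1)) := by
          rw [← hmz, zpow_natCast]
          field_simp
  -- assemble
  rw [Psi]
  calc ∑' k : ℕ, ∑ h ∈ Finset.Icc 1 (⌊((k:ℝ)+1)*rho⌋.toNat), lam^(k+1) * mu^h
      = ∑' k : ℕ, ∑ h ∈ Finset.Icc 1 (N k), lam^(k+1) * mu^h := by simp only [hNdef]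
    _ = ∑' k : ℕ, ∑' h : ℕ, g k h := tsum_congr (fun k => hinner k)
    _ = ∑' h : ℕ, ∑' k : ℕ, g k h := hswap
    _ = ∑' h : ℕ, (1/(1-lam)) * (lam ^ ⌈((h:ℝ)+1)/rho⌉ * mu^(h+1)) := tsum_congr hinnerk
    _ = (1/(1-lam)) * ∑' h : ℕ, lam ^ ⌈((h:ℝ)+1)/rho⌉ * mu^(h+1) := tsum_mul_left
end

section
/- If λμ < 1 with 0 < λ < 1, μ > 0, then lim_{ρ→1⁻} Ψ_ρ(λ,μ) = λ²μ / ((1−λ)(1−λμ)), where Ψ_ρ(λ,μ) = Σ_{k≥1} Σ_{1≤h≤kρ} λ^k μ^h; in particular 0 < Ψ_ρ(λ,μ) < λ²μ/((1−λ)(1−λμ)) for all 0 < ρ < 1. -/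
open Filter

noncomputable def bAux (lam mu : ℝ) (k : ℕ) : ℝ :=
  ∑ h ∈ Finset.Icc 1 k, lam ^ (k + 1) * mu ^ h

noncomputable def cAux (lam mu rho : ℝ) (k : ℕ) : ℝ :=
  ∑ h ∈ Finset.Icc 1 (⌊((k : ℝ) + 1) * rho⌋.toNat), lam ^ (k + 1) * mu ^ h

lemma psi_eq (lam mu rho : ℝ) : Psi lam mu rho = ∑' k : ℕ, cAux lam mu rho k := rfl

section main
variable {lam mu : ℝ} (hlam0 : 0 < lam) (hlam1 : lam < 1) (hmu : 0 < mu)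
    (hlm : lam * mu < 1)

include hlam0 hlam1 hmu hlm

lemma b_nonneg : ∀ k, 0 ≤ bAux lam mu k := fun k =>
  Finset.sum_nonneg fun h _ => by positivity

lemma c_nonneg (rho : ℝ) : ∀ k, 0 ≤ cAux lam mu rho k := fun k =>
  Finset.sum_nonneg fun h _ => by positivity

lemma b_summable : Summable (bAux lam mu) := by
  set M := max 1 mu with hM
  have hM1 : (1:ℝ) ≤ M := le_max_left _ _
  have hlM : lam * M < 1 := by
    rcases max_cases 1 mu with ⟨h, _⟩ | ⟨h, _⟩
    · rw [hM, h]; simpa using hlam1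
    · rw [hM, h]; exact hlm
  have hs : Summable (fun k : ℕ => lam * ((k : ℝ) * (lam * M) ^ k)) := by
    apply Summable.mul_left
    have := summable_pow_mul_geometric_of_norm_lt_one (R := ℝ) 1
      (r := lam * M) (by rw [Real.norm_eq_abs, abs_of_pos (by positivity)]; exact hlM)
    simpa using this
  apply Summable.of_nonneg_of_le (b_nonneg hlam0 hlam1 hmu hlm) _ hs
  intro k
  have hb : bAux lam mu k ≤ (Finset.Icc 1 k).card • (lam ^ (k+1) * M ^ k) := by
    apply Finset.sum_le_card_nsmul
    intro h hh
    simp only [Finset.mem_Icc] at hh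
    have h1 : mu ^ h ≤ M ^ h := pow_le_pow_left₀ hmu.le (le_max_right _ _) h
    have h2 : M ^ h ≤ M ^ k := pow_le_pow_right₀ hM1 hh.2
    have : mu ^ h ≤ M ^ k := h1.trans h2
    exact mul_le_mul_of_nonneg_left this (by positivity)
  calc bAux lam mu k ≤ (Finset.Icc 1 k).card • (lam ^ (k+1) * M ^ k) := hb
    _ = lam * ((k : ℝ) * (lam * M) ^ k) := by
        rw [Nat.card_Icc]; simp [nsmul_eq_mul, mul_pow, pow_succ]; ring

omit hlam0 hlam1 hmu hlm in
lemma toNat_floor_le {rho : ℝ} (hrho : rho < 1) (k : ℕ) :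
    (⌊((k : ℝ) + 1) * rho⌋).toNat ≤ k := by
  rcases le_or_gt rho 0 with h | h
  · have : ((k : ℝ) + 1) * rho ≤ 0 := mul_nonpos_of_nonneg_of_nonpos (by positivity) h
    have : ⌊((k : ℝ) + 1) * rho⌋ ≤ 0 := Int.floor_nonpos this
    omega
  · have hx : ((k : ℝ) + 1) * rho < ((k : ℤ) + 1 : ℤ) := by
      push_cast
      nlinarith [Nat.cast_nonneg (α := ℝ) k]
    have := Int.floor_lt.mpr hx
    omega

lemma c_le_b {rho : ℝ} (hrho : rho < 1) : ∀ k, cAux lam mu rho k ≤ bAux lam mu k := by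
  intro k
  apply Finset.sum_le_sum_of_subset_of_nonneg
  · apply Finset.Icc_subset_Icc le_rfl
    exact toNat_floor_le hrho k
  · intro h _ _; positivity

lemma c_summable {rho : ℝ} (hrho : rho < 1) : Summable (cAux lam mu rho) :=
  Summable.of_nonneg_of_le (c_nonneg hlam0 hlam1 hmu hlm rho)
    (c_le_b hlam0 hlam1 hmu hlm hrho) (b_summable hlam0 hlam1 hmu hlm)

lemma b_tsum : ∑' k, bAux lam mu k = lam ^ 2 * mu / ((1 - lam) * (1 - lam * mu)) := by
  have hl1 : (1:ℝ) - lam ≠ 0 := by nlinarith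
  have hlm1 : (1:ℝ) - lam * mu ≠ 0 := by nlinarith
  by_cases hmu1 : mu = 1
  · subst hmu1
    have hb : ∀ k, bAux lam 1 k = lam * ((k : ℝ) * lam ^ k) := by
      intro k
      simp [bAux, Nat.card_Icc, pow_succ]
      ring
    rw [tsum_congr hb, tsum_mul_left,
      tsum_coe_mul_geometric_of_norm_lt_one
        (by rw [Real.norm_eq_abs, abs_of_pos hlam0]; exact hlam1)]
    field_simp
  · have hmu1' : mu - 1 ≠ 0 := sub_ne_zero.mpr hmu1
    have hb : ∀ k, bAux lam mu k =
        ((lam * mu) ^ (k + 1) - mu * lam ^ (k + 1)) / (mu - 1) := by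
      intro k
      have : ∑ h ∈ Finset.Icc 1 k, mu ^ h = (mu ^ (k + 1) - mu ^ 1) / (mu - 1) := by
        rw [show Finset.Icc 1 k = Finset.Ico 1 (k + 1) by rfl]
        exact geom_sum_Ico hmu1 (by omega)
      rw [bAux, ← Finset.mul_sum, this, mul_pow]
      field_simp
    have hs1 : Summable (fun k : ℕ => (lam * mu) ^ (k + 1)) :=
      (summable_nat_add_iff 1).mpr (summable_geometric_of_lt_one (by positivity) hlm)
    have hsl : Summable (fun k : ℕ => lam ^ (k + 1)) :=
      (summable_nat_add_iff 1).mpr (summable_geometric_of_lt_one hlam0.le hlam1)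
    have hs2 : Summable (fun k : ℕ => mu * lam ^ (k + 1)) := hsl.mul_left mu
    have ht1 : ∑' k : ℕ, (lam * mu) ^ (k + 1) = lam * mu / (1 - lam * mu) := by
      rw [Summable.tsum_eq_zero_add]
      · rw [show (fun k : ℕ => (lam*mu)^(k+1+1)) = fun k : ℕ => (lam*mu)^2 * (lam*mu)^k by
          funext k; ring]
        rw [tsum_mul_left, tsum_geometric_of_lt_one (by positivity) hlm]
        field_simp
        ring
      · exact hs1
    have ht2 : ∑' k : ℕ, lam ^ (k + 1) = lam / (1 - lam) := by
      rw [Summable.tsum_eq_zero_add]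
      · rw [show (fun k : ℕ => lam^(k+1+1)) = fun k : ℕ => lam^2 * lam^k by
          funext k; ring]
        rw [tsum_mul_left, tsum_geometric_of_lt_one hlam0.le hlam1]
        field_simp
        ring
      · exact hsl
    rw [tsum_congr hb]
    rw [show (fun k : ℕ => ((lam * mu) ^ (k + 1) - mu * lam ^ (k + 1)) / (mu - 1)) =
        fun k : ℕ => (mu - 1)⁻¹ * ((lam * mu) ^ (k + 1) - mu * lam ^ (k + 1)) by
      funext k; field_simp]
    rw [tsum_mul_left, Summable.tsum_sub hs1 hs2, ht1, tsum_mul_left, ht2]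
    field_simp
    linear_combination (inv_mul_cancel₀ hlm1 : (1 - lam * mu)⁻¹ * (1 - lam * mu) = 1)

end main

theorem stmt5 (lam mu : ℝ) (hlam0 : 0 < lam) (hlam1 : lam < 1) (hmu : 0 < mu)
    (hlm : lam * mu < 1) :
    Tendsto (fun rho => Psi lam mu rho) (nhdsWithin 1 (Set.Iio 1))
      (nhds (lam ^ 2 * mu / ((1 - lam) * (1 - lam * mu)))) ∧
    ∀ rho ∈ Set.Ioo (0 : ℝ) 1,
      0 < Psi lam mu rho ∧ Psi lam mu rho < lam ^ 2 * mu / ((1 - lam) * (1 - lam * mu)) := by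
  have hbs := b_summable hlam0 hlam1 hmu hlm
  have hbt := b_tsum hlam0 hlam1 hmu hlm
  constructor
  · rw [Metric.tendsto_nhdsWithin_nhds]
    intro ε hε
    -- choose N with tail < ε
    have htail := hbs.hasSum.tendsto_sum_nat
    have : ∀ᶠ N in atTop,
        dist (∑ i ∈ Finset.range N, bAux lam mu i) (∑' k, bAux lam mu k) < ε :=
      (Metric.tendsto_nhds.mp htail) ε hε
    obtain ⟨N, hN⟩ := this.exists
    refine ⟨1 / (N + 1), by positivity, ?_⟩
    intro rho hrho hd
    rw [Real.dist_eq] at hd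
    have hrho1 : rho < 1 := hrho
    have hrhoN : (N : ℝ) / (N + 1) < rho := by
      rw [abs_lt] at hd
      have : (N : ℝ) / (N + 1) = 1 - 1 / (N + 1) := by
        field_simp
        ring
      linarith [hd.1]
    have hcs := c_summable hlam0 hlam1 hmu hlm (rho := rho) hrho1
    have hcb := c_le_b hlam0 hlam1 hmu hlm (rho := rho) hrho1
    -- for k < N, cAux = bAux
    have heq : ∀ k < N, cAux lam mu rho k = bAux lam mu k := by
      intro k hk
      have hk1 : ((k : ℝ) + 1) * rho < (k : ℝ) + 1 := by
        nlinarith [Nat.cast_nonneg (α := ℝ) k]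
      have hk2 : (k : ℝ) ≤ ((k : ℝ) + 1) * rho := by
        have h1 : (k : ℝ) / ((k : ℝ) + 1) ≤ (N : ℝ) / (N + 1) := by
          rw [div_le_div_iff₀ (by positivity) (by positivity)]
          have : (k : ℝ) ≤ N := by exact_mod_cast hk.le
          nlinarith
        have h2 : (k : ℝ) / ((k : ℝ) + 1) < rho := lt_of_le_of_lt h1 hrhoN
        rw [div_lt_iff₀ (by positivity)] at h2
        linarith
      have hf : ⌊((k : ℝ) + 1) * rho⌋ = (k : ℤ) := by
        rw [Int.floor_eq_iff]
        constructor
        · push_cast; exact hk2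
        · push_cast; exact hk1
      simp [cAux, bAux, hf]
    -- difference d = b - c
    set d := fun k => bAux lam mu k - cAux lam mu rho k with hdd
    have hds : Summable d := hbs.sub hcs
    have hd0 : ∀ k, 0 ≤ d k := fun k => sub_nonneg.mpr (hcb k)
    have hdsum : ∑' k, d k = ∑' k, bAux lam mu k - ∑' k, cAux lam mu rho k :=
      Summable.tsum_sub hbs hcs
    have hsplit := Summable.sum_add_tsum_nat_add N hds
    have hzero : ∑ i ∈ Finset.range N, d i = 0 := by
      apply Finset.sum_eq_zero
      intro i hi
      simp only [Finset.mem_range] at hi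
      simp [hdd, heq i hi]
    have hshift_le : ∑' i : ℕ, d (i + N) ≤ ∑' i : ℕ, bAux lam mu (i + N) := by
      apply Summable.tsum_le_tsum
      · intro i
        simp only [hdd]
        have := c_nonneg hlam0 hlam1 hmu hlm rho (i + N)
        linarith
      · exact (summable_nat_add_iff N).mpr hds
      · exact (summable_nat_add_iff N).mpr hbs
    have hbtail : ∑' i : ℕ, bAux lam mu (i + N) < ε := by
      have := Summable.sum_add_tsum_nat_add N hbs
      rw [Real.dist_eq, abs_lt] at hN
      linarith
    have hle : ∑' k, cAux lam mu rho k ≤ ∑' k, bAux lam mu k :=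
      Summable.tsum_le_tsum hcb hcs hbs
    have hdiff : ∑' k, bAux lam mu k - ∑' k, cAux lam mu rho k < ε := by
      have : ∑' k, d k < ε := by
        rw [← hsplit, hzero]
        linarith
      linarith [hdsum ▸ this]
    rw [Real.dist_eq, psi_eq, ← hbt, abs_sub_comm,
      abs_of_nonneg (sub_nonneg.mpr hle)]
    exact hdiff
  · intro rho hrho
    obtain ⟨hr0, hr1⟩ := hrho
    have hcs := c_summable hlam0 hlam1 hmu hlm (rho := rho) hr1
    have hcb := c_le_b hlam0 hlam1 hmu hlm (rho := rho) hr1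
    constructor
    · -- positivity
      obtain ⟨n, hn⟩ := exists_nat_ge (1 / rho)
      have hpos : 0 < cAux lam mu rho n := by
        have h1 : (1 : ℝ) ≤ ((n : ℝ) + 1) * rho := by
          have : 1 / rho * rho ≤ (n : ℝ) * rho := by
            apply mul_le_mul_of_nonneg_right hn hr0.le
          rw [one_div_mul_cancel hr0.ne'] at this
          nlinarith
        have hf : 1 ≤ ⌊((n : ℝ) + 1) * rho⌋ := by
          apply Int.le_floor.mpr; push_cast; exact h1
        have hmem : 1 ∈ Finset.Icc 1 (⌊((n : ℝ) + 1) * rho⌋).toNat := by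
          simp; omega
        apply Finset.sum_pos'
        · intro h _; positivity
        · exact ⟨1, hmem, by positivity⟩
      rw [psi_eq]
      exact Summable.tsum_pos hcs (c_nonneg hlam0 hlam1 hmu hlm rho) n hpos
    · -- strict upper bound
      obtain ⟨n, hn⟩ := exists_nat_one_div_lt (show (0:ℝ) < 1 - rho by linarith)
      have hn1 : 1 ≤ n := by
        by_contra h
        push_neg at h
        interval_cases n
        simp at hn
        linarith
      have hlt : cAux lam mu rho n < bAux lam mu n := by
        have hx : ((n : ℝ) + 1) * rho < (n : ℝ) := by
          have h1 : rho < 1 - 1 / ((n : ℝ) + 1) := by linarith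
          have h2 : (1 : ℝ) - 1 / ((n : ℝ) + 1) = (n : ℝ) / ((n : ℝ) + 1) := by
            field_simp
            ring
          rw [h2, lt_div_iff₀ (by positivity)] at h1
          linarith
        have hf : ⌊((n : ℝ) + 1) * rho⌋ < (n : ℤ) := Int.floor_lt.mpr (by push_cast; exact hx)
        have hnot : n ∉ Finset.Icc 1 (⌊((n : ℝ) + 1) * rho⌋).toNat := by
          simp only [Finset.mem_Icc, not_and, not_le]
          intro _
          omega
        apply Finset.sum_lt_sum_of_subset
        · apply Finset.Icc_subset_Icc le_rfl
          exact toNat_floor_le hr1 n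
        · exact Finset.mem_Icc.mpr ⟨hn1, le_rfl⟩
        · exact hnot
        · positivity
        · intro j _ _; positivity
      rw [psi_eq, ← hbt]
      exact Summable.tsum_lt_tsum hcb hlt hcs hbs
end

section
/- For 0 < λ < 1, μ > 0, the map ρ ↦ δ(λ,μ,ρ) is strictly increasing on the interval (0, r_{λ,μ}) and its image is contained in the interval (1−λ, d_{λ,μ}). -/
/-- δ(λ,μ,ρ) = (1−λ)(1+μσ)/(1+(μ−1)σ). -/
noncomputable def deltaFn (lam mu rho : ℝ) : ℝ :=
  (1 - lam) * (1 + mu * sigmaFn lam mu rho) / (1 + (mu - 1) * sigmaFn lam mu rho)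

/-- r_{λ,μ}. -/
noncomputable def rFn (lam mu : ℝ) : ℝ :=
  if lam * mu < 1 then 1 else -Real.log lam / Real.log mu

/-- d_{λ,μ}. -/
noncomputable def dFn (lam mu : ℝ) : ℝ :=
  if lam * mu < 1 then 1 else (mu - lam * mu) / (mu - 1)

noncomputable def Kfn (rho : ℝ) (m : ℕ) : ℕ := (⌈((m : ℝ) + 1) / rho⌉ - 1).toNat

lemma ceil_big {rho : ℝ} (h0 : 0 < rho) (h1 : rho < 1) (m : ℕ) :
    (m : ℤ) + 2 ≤ ⌈((m : ℝ) + 1) / rho⌉ := by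
  have h : (((m : ℤ) + 1 : ℤ) : ℝ) < ((m : ℝ) + 1) / rho := by
    rw [lt_div_iff₀ h0]; push_cast; nlinarith [Nat.cast_nonneg (α := ℝ) m]
  have := Int.lt_ceil.mpr h
  omega

lemma Kfn_cast {rho : ℝ} (h0 : 0 < rho) (h1 : rho < 1) (m : ℕ) :
    (Kfn rho m : ℝ) = ((⌈((m : ℝ) + 1) / rho⌉ : ℤ) : ℝ) - 1 := by
  have h := ceil_big h0 h1 m
  have h2 : ((Kfn rho m : ℕ) : ℤ) = ⌈((m : ℝ) + 1) / rho⌉ - 1 :=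
    Int.toNat_of_nonneg (by omega)
  have h3 := congrArg (fun z : ℤ => (z : ℝ)) h2
  push_cast at h3
  linarith

lemma Kfn_ge {rho : ℝ} (h0 : 0 < rho) (h1 : rho < 1) (m : ℕ) :
    m + 1 ≤ Kfn rho m := by
  have h := ceil_big h0 h1 m
  rw [Kfn]; omega

lemma Kfn_bounds {rho : ℝ} (h0 : 0 < rho) (h1 : rho < 1) (m : ℕ) :
    (m : ℝ) + 1 ≤ ((Kfn rho m : ℝ) + 1) * rho ∧
      (Kfn rho m : ℝ) * rho < (m : ℝ) + 1 ∧ (m : ℝ) ≤ (Kfn rho m : ℝ) * rho := by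
  have hc := Kfn_cast h0 h1 m
  set c : ℤ := ⌈((m : ℝ) + 1) / rho⌉ with hcdef
  have hle : ((m : ℝ) + 1) / rho ≤ (c : ℝ) := Int.le_ceil _
  have hlt : (c : ℝ) < ((m : ℝ) + 1) / rho + 1 := Int.ceil_lt_add_one _
  have hle' : (m : ℝ) + 1 ≤ (c : ℝ) * rho := by
    rw [div_le_iff₀ h0] at hle; linarith
  have hlt' : ((c : ℝ) - 1) * rho < (m : ℝ) + 1 := by
    have : (c : ℝ) - 1 < ((m : ℝ) + 1) / rho := by linarith
    rw [lt_div_iff₀ h0] at this; linarith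
  refine ⟨by rw [hc]; nlinarith, by rw [hc]; nlinarith, by rw [hc]; nlinarith⟩

lemma Kfn_floors {rho : ℝ} (h0 : 0 < rho) (h1 : rho < 1) (m : ℕ) :
    ⌊(Kfn rho m : ℝ) * rho⌋ = (m : ℤ) ∧ ⌊((Kfn rho m : ℝ) + 1) * rho⌋ = (m : ℤ) + 1 := by
  obtain ⟨hA, hB, hC⟩ := Kfn_bounds h0 h1 m
  constructor
  · rw [Int.floor_eq_iff]
    exact ⟨by exact_mod_cast hC, by push_cast; linarith⟩
  · rw [Int.floor_eq_iff]
    exact ⟨by push_cast; linarith, by push_cast; nlinarith⟩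

lemma sigma_eq {lam mu rho : ℝ} (hlam0 : 0 < lam) (hmu : 0 < mu)
    (h0 : 0 < rho) (h1 : rho < 1) :
    sigmaFn lam mu rho = ∑' m : ℕ, lam ^ (Kfn rho m) * mu ^ m := by
  rw [sigmaFn]
  set f : ℕ → ℝ := fun k => ((⌊((k : ℝ) + 2) * rho⌋ - ⌊((k : ℝ) + 1) * rho⌋ : ℤ) : ℝ) *
    lam ^ (k + 1) * mu ^ ⌊((k : ℝ) + 1) * rho⌋ with hfdef
  set g : ℕ → ℝ := fun m => lam ^ (Kfn rho m) * mu ^ m with hgdef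
  have castK : ∀ m : ℕ, (((Kfn rho m - 1 : ℕ) : ℝ)) = (Kfn rho m : ℝ) - 1 := by
    intro m
    have := Kfn_ge h0 h1 m
    push_cast [Nat.cast_sub (by omega : 1 ≤ Kfn rho m)]
    ring
  have key : ∀ m : ℕ, f (Kfn rho m - 1) = g m := by
    intro m
    have hK := Kfn_ge h0 h1 m
    obtain ⟨hf1, hf2⟩ := Kfn_floors h0 h1 m
    have e1 : ((Kfn rho m - 1 : ℕ) : ℝ) + 1 = (Kfn rho m : ℝ) := by rw [castK]; ring
    have e2 : ((Kfn rho m - 1 : ℕ) : ℝ) + 2 = (Kfn rho m : ℝ) + 1 := by rw [castK]; ring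
    simp only [hfdef, hgdef, e1, e2, hf1, hf2, Nat.sub_add_cancel (by omega : 1 ≤ Kfn rho m)]
    push_cast
    rw [zpow_natCast]
    ring
  apply tsum_eq_tsum_of_ne_zero_bij (fun m => Kfn rho m.1 - 1)
  · intro m1 m2 h
    have hg1 := Kfn_ge h0 h1 m1.1
    have hg2 := Kfn_ge h0 h1 m2.1
    have hK : Kfn rho m1.1 = Kfn rho m2.1 := by
      simp only at h; omega
    have f1 := (Kfn_floors h0 h1 m1.1).1
    have f2 := (Kfn_floors h0 h1 m2.1).1
    rw [hK] at f1
    have : (m1.1 : ℤ) = (m2.1 : ℤ) := by rw [← f1, ← f2]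
    exact Subtype.ext (by exact_mod_cast this)
  · intro k hk
    simp only [Function.mem_support, hfdef] at hk
    set a : ℤ := ⌊((k : ℝ) + 1) * rho⌋ with hadef
    set b : ℤ := ⌊((k : ℝ) + 2) * rho⌋ with hbdef
    have hkpos : (0 : ℝ) < ((k : ℝ) + 1) * rho := by positivity
    have hba : b = a + 1 := by
      have hab : a ≤ b := Int.floor_le_floor (by nlinarith [Nat.cast_nonneg (α := ℝ) k])
      have hb1 : b ≤ a + 1 := by
        have h3 : ((k : ℝ) + 2) * rho ≤ ((k : ℝ) + 1) * rho + 1 := by nlinarith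
        calc b ≤ ⌊((k : ℝ) + 1) * rho + 1⌋ := Int.floor_le_floor h3
          _ = a + 1 := by rw [Int.floor_add_one]
      have hne : b ≠ a := by
        intro h
        apply hk
        rw [show b - a = 0 by omega]
        simp
      omega
    have ha0 : 0 ≤ a := Int.floor_nonneg.mpr hkpos.le
    set m : ℕ := a.toNat with hmdef
    have hm : ((m : ℕ) : ℤ) = a := Int.toNat_of_nonneg ha0
    have hmr : ((m : ℕ) : ℝ) = ((a : ℤ) : ℝ) := by exact_mod_cast congrArg (fun z : ℤ => (z : ℝ)) hm
    have hflt : ((k : ℝ) + 1) * rho < (m : ℝ) + 1 := by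
      have := Int.lt_floor_add_one (((k : ℝ) + 1) * rho)
      rw [← hadef] at this
      rw [hmr]; linarith
    have hfle : (m : ℝ) + 1 ≤ ((k : ℝ) + 2) * rho := by
      have h4 : ((b : ℤ) : ℝ) ≤ ((k : ℝ) + 2) * rho := by
        rw [hbdef]; exact Int.floor_le _
      have h5 : ((b : ℤ) : ℝ) = (m : ℝ) + 1 := by rw [hmr, hba]; push_cast; ring
      linarith
    have hceil : ⌈((m : ℝ) + 1) / rho⌉ = (k : ℤ) + 2 := by
      rw [Int.ceil_eq_iff]
      constructor
      · rw [lt_div_iff₀ h0]; push_cast; nlinarith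
      · rw [div_le_iff₀ h0]; push_cast; nlinarith
    have hKm : Kfn rho m = k + 1 := by rw [Kfn, hceil]; omega
    refine ⟨⟨m, ?_⟩, ?_⟩
    · simp only [Function.mem_support, hgdef]
      positivity
    · simp only [hKm]; omega
  · intro x
    exact key x.1

lemma g_le_bound {lam mu rho : ℝ} (hlam0 : 0 < lam) (hlam1 : lam < 1) (hmu : 0 < mu)
    (h0 : 0 < rho) (h1 : rho < 1) (m : ℕ) :
    lam ^ (Kfn rho m) * mu ^ m ≤
      lam ^ ((1 : ℝ) / rho - 1) * (lam ^ ((1 : ℝ) / rho) * mu) ^ m := by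
  obtain ⟨hA, _, _⟩ := Kfn_bounds h0 h1 m
  have hKge : ((m : ℝ) + 1) / rho - 1 ≤ (Kfn rho m : ℝ) := by
    have : ((m : ℝ) + 1) / rho ≤ (Kfn rho m : ℝ) + 1 := by
      rw [div_le_iff₀ h0]; nlinarith
    linarith
  have h2 : lam ^ (Kfn rho m) ≤ lam ^ (((m : ℝ) + 1) / rho - 1) := by
    rw [← Real.rpow_natCast lam (Kfn rho m)]
    exact Real.rpow_le_rpow_of_exponent_ge hlam0 hlam1.le hKge
  have h3 : lam ^ (((m : ℝ) + 1) / rho - 1) =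
      lam ^ ((1 : ℝ) / rho - 1) * (lam ^ ((1 : ℝ) / rho)) ^ m := by
    rw [← Real.rpow_natCast (lam ^ ((1 : ℝ) / rho)) m, ← Real.rpow_mul hlam0.le,
      ← Real.rpow_add hlam0]
    congr 1
    field_simp
    ring
  calc lam ^ (Kfn rho m) * mu ^ m ≤ lam ^ (((m : ℝ) + 1) / rho - 1) * mu ^ m := by
        apply mul_le_mul_of_nonneg_right h2 (by positivity)
    _ = lam ^ ((1 : ℝ) / rho - 1) * (lam ^ ((1 : ℝ) / rho) * mu) ^ m := by
        rw [h3, mul_pow]; ring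

lemma summable_g {lam mu rho : ℝ} (hlam0 : 0 < lam) (hlam1 : lam < 1) (hmu : 0 < mu)
    (h0 : 0 < rho) (h1 : rho < 1) (hq : lam ^ ((1 : ℝ) / rho) * mu < 1) :
    Summable (fun m : ℕ => lam ^ (Kfn rho m) * mu ^ m) := by
  apply Summable.of_nonneg_of_le (fun m => by positivity)
    (g_le_bound hlam0 hlam1 hmu h0 h1)
  exact (summable_geometric_of_lt_one (by positivity) hq).mul_left _

lemma rho_facts {lam mu rho : ℝ} (hlam0 : 0 < lam) (hlam1 : lam < 1) (hmu : 0 < mu)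
    (h0 : 0 < rho) (hr : rho < rFn lam mu) :
    rho < 1 ∧ lam ^ ((1 : ℝ) / rho) * mu < 1 := by
  rw [rFn] at hr
  by_cases hlm : lam * mu < 1
  · rw [if_pos hlm] at hr
    refine ⟨hr, ?_⟩
    have h2 : lam ^ ((1 : ℝ) / rho) < lam ^ (1 : ℝ) :=
      Real.rpow_lt_rpow_of_exponent_gt hlam0 hlam1 (by rw [lt_div_iff₀ h0]; linarith)
    rw [Real.rpow_one] at h2
    nlinarith [Real.rpow_pos_of_pos hlam0 ((1 : ℝ) / rho)]
  · rw [if_neg hlm] at hr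
    push_neg at hlm
    have hmu1 : 1 < mu := by
      rcases lt_or_ge 1 mu with h | h
      · exact h
      · nlinarith
    have hlogmu : 0 < Real.log mu := Real.log_pos hmu1
    have hloglam : Real.log lam < 0 := Real.log_neg hlam0 hlam1
    have hr' : rho * Real.log mu < -Real.log lam := by
      have := (lt_div_iff₀ hlogmu).mp hr
      linarith
    constructor
    · have h1 : -Real.log lam ≤ Real.log mu := by
        rw [← Real.log_inv]
        apply Real.log_le_log (by positivity)
        rw [inv_eq_one_div, div_le_iff₀ hlam0]
        nlinarith
      nlinarith
    · have hqpos : 0 < lam ^ ((1 : ℝ) / rho) * mu := by positivity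
      rw [← Real.log_neg_iff hqpos]
      rw [Real.log_mul (by positivity) (by positivity), Real.log_rpow hlam0]
      have : Real.log mu < -Real.log lam / rho := by
        rw [lt_div_iff₀ h0]; linarith [hr']
      have h5 : (1 : ℝ) / rho * Real.log lam < -Real.log mu := by
        rw [div_mul_eq_mul_div, div_lt_iff₀ h0]
        nlinarith
      linarith

lemma Kfn_anti {rho1 rho2 : ℝ} (h01 : 0 < rho1) (h12 : rho1 ≤ rho2) (h21 : rho2 < 1) (m : ℕ) :
    Kfn rho2 m ≤ Kfn rho1 m := by
  have hd : ((m : ℝ) + 1) / rho2 ≤ ((m : ℝ) + 1) / rho1 := by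
    apply div_le_div_of_nonneg_left (by positivity) h01 h12
  have hc := Int.ceil_le_ceil hd
  have b1 := ceil_big h01 (by linarith) m
  have b2 := ceil_big (by linarith) h21 m
  rw [Kfn, Kfn]; omega

lemma Kfn_strict {rho1 rho2 : ℝ} (h01 : 0 < rho1) (h12 : rho1 < rho2) (h21 : rho2 < 1) :
    ∃ n : ℕ, Kfn rho2 n < Kfn rho1 n := by
  have hd : 0 < 1 / rho1 - 1 / rho2 := by
    have := div_lt_div_of_pos_left one_pos h01 h12
    linarith
  obtain ⟨n, hn⟩ := exists_nat_gt (1 / (1 / rho1 - 1 / rho2))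
  refine ⟨n, ?_⟩
  have key : ((n : ℝ) + 1) / rho2 + 1 < ((n : ℝ) + 1) / rho1 := by
    have e1 : ((n : ℝ) + 1) / rho1 - ((n : ℝ) + 1) / rho2
        = ((n : ℝ) + 1) * (1 / rho1 - 1 / rho2) := by ring
    have h2 : 1 < (n : ℝ) * (1 / rho1 - 1 / rho2) := by
      rw [div_lt_iff₀ hd] at hn; linarith
    nlinarith [Nat.cast_nonneg (α := ℝ) n]
  have hc2 : ((⌈((n : ℝ) + 1) / rho2⌉ : ℤ) : ℝ) < ((n : ℝ) + 1) / rho1 := by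
    have := Int.ceil_lt_add_one (((n : ℝ) + 1) / rho2)
    linarith
  have hcc : ⌈((n : ℝ) + 1) / rho2⌉ < ⌈((n : ℝ) + 1) / rho1⌉ := Int.lt_ceil.mpr hc2
  have b1 := ceil_big h01 (by linarith) n
  have b2 := ceil_big (by linarith) h21 n
  rw [Kfn, Kfn]; omega

lemma sigma_mono {lam mu rho1 rho2 : ℝ} (hlam0 : 0 < lam) (hlam1 : lam < 1) (hmu : 0 < mu)
    (h01 : 0 < rho1) (h12 : rho1 < rho2) (h21 : rho2 < 1)
    (hq2 : lam ^ ((1 : ℝ) / rho2) * mu < 1) :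
    sigmaFn lam mu rho1 < sigmaFn lam mu rho2 := by
  rw [sigma_eq hlam0 hmu h01 (lt_trans h12 h21), sigma_eq hlam0 hmu (lt_trans h01 h12) h21]
  obtain ⟨n, hn⟩ := Kfn_strict h01 h12 h21
  apply Summable.tsum_lt_tsum_of_nonneg (i := n) (fun m => by positivity)
  · intro m
    exact mul_le_mul_of_nonneg_right
      (pow_le_pow_of_le_one hlam0.le hlam1.le (Kfn_anti h01 h12.le h21 m)) (by positivity)
  · exact mul_lt_mul_of_pos_right (pow_lt_pow_right_of_lt_one₀ hlam0 hlam1 hn) (by positivity)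
  · exact summable_g hlam0 hlam1 hmu (h01.trans h12) h21 hq2

lemma sigma_pos {lam mu rho : ℝ} (hlam0 : 0 < lam) (hlam1 : lam < 1) (hmu : 0 < mu)
    (h0 : 0 < rho) (h1 : rho < 1) (hq : lam ^ ((1 : ℝ) / rho) * mu < 1) :
    0 < sigmaFn lam mu rho := by
  rw [sigma_eq hlam0 hmu h0 h1]
  exact Summable.tsum_pos (summable_g hlam0 hlam1 hmu h0 h1 hq) (fun m => by positivity) 0 (by positivity)

lemma sigma_upper {lam mu rho : ℝ} (hlam0 : 0 < lam) (hlam1 : lam < 1) (hmu : 0 < mu)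
    (h0 : 0 < rho) (h1 : rho < 1) (hlm : lam * mu < 1) :
    sigmaFn lam mu rho < lam * (1 - lam * mu)⁻¹ := by
  rw [sigma_eq hlam0 hmu h0 h1]
  have hgeom : Summable (fun m : ℕ => lam * (lam * mu) ^ m) :=
    (summable_geometric_of_lt_one (by positivity) hlm).mul_left lam
  have hd : 0 < 1 / rho - 1 := by
    have : 1 < 1 / rho := by rw [lt_div_iff₀ h0]; linarith
    linarith
  obtain ⟨n, hn⟩ := exists_nat_gt (1 / (1 / rho - 1))
  have hstrict : n + 1 < Kfn rho n := by
    have h2 : 1 < (n : ℝ) * (1 / rho - 1) := by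
      rw [div_lt_iff₀ hd] at hn; linarith
    have key : (((n : ℤ) + 2 : ℤ) : ℝ) < ((n : ℝ) + 1) / rho := by
      have e1 : ((n : ℝ) + 1) / rho - ((n : ℝ) + 1) = ((n : ℝ) + 1) * (1 / rho - 1) := by ring
      push_cast
      nlinarith [Nat.cast_nonneg (α := ℝ) n]
    have hcl := Int.lt_ceil.mpr key
    rw [Kfn]; omega
  have hlt : (∑' m : ℕ, lam ^ (Kfn rho m) * mu ^ m) < ∑' m : ℕ, lam * (lam * mu) ^ m := by
    apply Summable.tsum_lt_tsum_of_nonneg (i := n) (fun m => by positivity) ?_ ?_ hgeom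
    · intro m
      calc lam ^ (Kfn rho m) * mu ^ m
          ≤ lam ^ (m + 1) * mu ^ m := mul_le_mul_of_nonneg_right
            (pow_le_pow_of_le_one hlam0.le hlam1.le (Kfn_ge h0 h1 m)) (by positivity)
        _ = lam * (lam * mu) ^ m := by rw [mul_pow, pow_succ]; ring
    · calc lam ^ (Kfn rho n) * mu ^ n
          < lam ^ (n + 1) * mu ^ n := mul_lt_mul_of_pos_right
            (pow_lt_pow_right_of_lt_one₀ hlam0 hlam1 hstrict) (by positivity)
        _ = lam * (lam * mu) ^ n := by rw [mul_pow, pow_succ]; ring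
  rwa [tsum_mul_left, tsum_geometric_of_lt_one (by positivity) hlm] at hlt

lemma sigma_facts {lam mu rho : ℝ} (hlam0 : 0 < lam) (hlam1 : lam < 1) (hmu : 0 < mu)
    (hrho : rho ∈ Set.Ioo 0 (rFn lam mu)) :
    0 < sigmaFn lam mu rho ∧ 0 < 1 + (mu - 1) * sigmaFn lam mu rho ∧
      (lam * mu < 1 → sigmaFn lam mu rho * (1 - lam * mu) < lam) := by
  obtain ⟨h0, hr⟩ := hrho
  obtain ⟨h1, hq⟩ := rho_facts hlam0 hlam1 hmu h0 hr
  have hpos := sigma_pos hlam0 hlam1 hmu h0 h1 hq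
  have hub : lam * mu < 1 → sigmaFn lam mu rho * (1 - lam * mu) < lam := by
    intro hlm
    have := sigma_upper hlam0 hlam1 hmu h0 h1 hlm
    have h2 : 0 < 1 - lam * mu := by linarith
    calc sigmaFn lam mu rho * (1 - lam * mu)
        < lam * (1 - lam * mu)⁻¹ * (1 - lam * mu) := by
          exact mul_lt_mul_of_pos_right this h2
      _ = lam := by field_simp
  refine ⟨hpos, ?_, hub⟩
  rcases le_or_gt 1 mu with h | h
  · nlinarith
  · have hlm : lam * mu < 1 := by nlinarith
    have := hub hlm
    nlinarith

theorem stmt6 (lam mu : ℝ) (hlam0 : 0 < lam) (hlam1 : lam < 1) (hmu : 0 < mu) :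
    StrictMonoOn (deltaFn lam mu) (Set.Ioo 0 (rFn lam mu)) ∧
    Set.MapsTo (deltaFn lam mu) (Set.Ioo 0 (rFn lam mu)) (Set.Ioo (1 - lam) (dFn lam mu)) := by
  constructor
  · intro r1 h1 r2 h2 h12
    obtain ⟨hs1, hD1, -⟩ := sigma_facts hlam0 hlam1 hmu h1
    obtain ⟨hs2, hD2, -⟩ := sigma_facts hlam0 hlam1 hmu h2
    obtain ⟨hr21, hq2⟩ := rho_facts hlam0 hlam1 hmu h2.1 h2.2
    have hs12 : sigmaFn lam mu r1 < sigmaFn lam mu r2 :=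
      sigma_mono hlam0 hlam1 hmu h1.1 h12 hr21 hq2
    rw [deltaFn, deltaFn, div_lt_div_iff₀ hD1 hD2]
    nlinarith [mul_pos (by linarith : (0:ℝ) < 1 - lam)
      (by linarith : (0:ℝ) < sigmaFn lam mu r2 - sigmaFn lam mu r1)]
  · intro rho hrho
    obtain ⟨hs, hD, hub⟩ := sigma_facts hlam0 hlam1 hmu hrho
    constructor
    · rw [deltaFn, lt_div_iff₀ hD]
      nlinarith [mul_pos (by linarith : (0:ℝ) < 1 - lam) hs]
    · rw [dFn]
      by_cases hlm : lam * mu < 1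
      · rw [if_pos hlm, deltaFn, div_lt_one hD]
        nlinarith [hub hlm]
      · rw [if_neg hlm]
        push_neg at hlm
        have hmu1 : 1 < mu := by nlinarith
        rw [deltaFn, div_lt_div_iff₀ hD (by linarith : (0:ℝ) < mu - 1)]
        nlinarith [hs]
end

section
/- For 0 < λ < 1, μ > 0, 0 < ρ < r_{λ,μ} and any real x > −1: Σ_{k≥0} (⌈(k+1)ρ+x⌉ − ⌈kρ+x⌉) λ^k μ^{⌈kρ+x⌉} = −(1−μ^{⌈x⌉})/((1−μ)λ) + ((1−λ)/λ)·Φ_ρ(λ,μ,x), where the ratio (1−μ^{⌈x⌉})/(1−μ) is interpreted as ⌈x⌉ when μ = 1. -/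
/-- The Hecke–Mahler series Φ_ρ(λ,μ,x) = Σ_{k≥0} Σ_{0≤l<kρ+x} λ^k μ^l. -/
noncomputable def PhiHM (rho lam mu x : ℝ) : ℝ :=
  ∑' k : ℕ, ∑ l ∈ Finset.range (⌈(k : ℝ) * rho + x⌉.toNat), lam ^ k * mu ^ l

theorem stmt8 (lam mu rho x : ℝ) (hlam0 : 0 < lam) (hlam1 : lam < 1) (hmu : 0 < mu)
    (hrho0 : 0 < rho)
    (hrho1 : rho < if lam * mu < 1 then 1 else -Real.log lam / Real.log mu)
    (hx : -1 < x) :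
    ∑' k : ℕ, ((⌈((k : ℝ) + 1) * rho + x⌉ - ⌈(k : ℝ) * rho + x⌉ : ℤ) : ℝ) *
        lam ^ k * mu ^ ⌈(k : ℝ) * rho + x⌉ =
      -(if mu = 1 then (⌈x⌉ : ℝ) else (1 - mu ^ ⌈x⌉) / (1 - mu)) / lam +
        (1 - lam) / lam * PhiHM rho lam mu x := by
  have hlamne : lam ≠ 0 := ne_of_gt hlam0
  have hmune : mu ≠ 0 := ne_of_gt hmu
  have hρ1 : rho ≤ 1 := by
    by_cases h : lam * mu < 1
    · rw [if_pos h] at hrho1; exact hrho1.le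
    · rw [if_neg h] at hrho1
      push_neg at h
      have hmu1 : 1 < mu := by nlinarith
      have hlmu : 0 < Real.log mu := Real.log_pos hmu1
      have h0 : 0 ≤ Real.log lam + Real.log mu := by
        have := Real.log_nonneg h
        rwa [Real.log_mul hlamne hmune] at this
      have : rho < 1 := by
        calc rho < -Real.log lam / Real.log mu := hrho1
          _ ≤ 1 := by rw [div_le_one hlmu]; linarith
      exact this.le
  set M : ℝ := max mu 1 with hMdef
  have hM1 : (1:ℝ) ≤ M := le_max_right _ _
  have hM0 : (0:ℝ) < M := lt_of_lt_of_le one_pos hM1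
  have hmuM : mu ≤ M := le_max_left _ _
  have hr1 : lam * M ^ rho < 1 := by
    rcases le_or_gt mu 1 with hle | hgt
    · rw [hMdef, max_eq_right hle, Real.one_rpow, mul_one]; exact hlam1
    · rw [hMdef, max_eq_left hgt.le]
      by_cases h : lam * mu < 1
      · rw [if_pos h] at hrho1
        have h2 : mu ^ rho ≤ mu ^ (1:ℝ) :=
          Real.rpow_le_rpow_of_exponent_le hgt.le hρ1
        rw [Real.rpow_one] at h2
        nlinarith [Real.rpow_pos_of_pos hmu rho]
      · rw [if_neg h] at hrho1
        push_neg at h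
        have hlmu : 0 < Real.log mu := Real.log_pos hgt
        have hrl : rho * Real.log mu < -Real.log lam :=
          (lt_div_iff₀ hlmu).mp hrho1
        have hpos : 0 < lam * mu ^ rho := by positivity
        have hlog : Real.log (lam * mu ^ rho) < 0 := by
          rw [Real.log_mul hlamne (by positivity), Real.log_rpow hmu]
          linarith
        exact (Real.log_neg_iff hpos).mp hlog
  set r : ℝ := lam * M ^ rho with hrdef
  have hr0 : (0:ℝ) ≤ r := by positivity
  set n : ℕ → ℕ := fun k => (⌈(k : ℝ) * rho + x⌉).toNat with hn
  set a : ℕ → ℝ := fun k => ∑ l ∈ Finset.range (n k), mu ^ l with ha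
  have hcnonneg : ∀ k : ℕ, 0 ≤ ⌈(k : ℝ) * rho + x⌉ := by
    intro k
    have hv : ((-1 : ℤ) : ℝ) < (k : ℝ) * rho + x := by
      push_cast
      nlinarith [Nat.cast_nonneg (α := ℝ) k]
    have := Int.lt_ceil.mpr hv
    omega
  have hcast : ∀ k : ℕ, (n k : ℤ) = ⌈(k : ℝ) * rho + x⌉ :=
    fun k => Int.toNat_of_nonneg (hcnonneg k)
  have hcoe : ∀ k : ℕ, ((k : ℝ) + 1) = ((k + 1 : ℕ) : ℝ) := by
    intro k; push_cast; ring
  have hsplit : ∀ k : ℕ, n (k+1) = n k ∨ n (k+1) = n k + 1 := by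
    intro k
    have e1 : (n k : ℤ) = ⌈(k : ℝ) * rho + x⌉ := hcast k
    have e2 : (n (k+1) : ℤ) = ⌈((k+1 : ℕ) : ℝ) * rho + x⌉ := hcast (k+1)
    have l1 : ⌈(k : ℝ) * rho + x⌉ ≤ ⌈((k+1 : ℕ) : ℝ) * rho + x⌉ := by
      apply Int.ceil_le_ceil
      push_cast
      nlinarith
    have l2 : ⌈((k+1 : ℕ) : ℝ) * rho + x⌉ ≤ ⌈(k : ℝ) * rho + x⌉ + 1 := by
      apply Int.ceil_le.mpr
      have := Int.le_ceil ((k : ℝ) * rho + x)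
      push_cast
      nlinarith
    omega
  have hterm : ∀ k : ℕ,
      ((⌈((k : ℝ) + 1) * rho + x⌉ - ⌈(k : ℝ) * rho + x⌉ : ℤ) : ℝ) *
        lam ^ k * mu ^ ⌈(k : ℝ) * rho + x⌉ = lam ^ k * a (k+1) - lam ^ k * a k := by
    intro k
    rw [hcoe k]
    have hz : mu ^ ⌈(k : ℝ) * rho + x⌉ = mu ^ (n k) := by
      rw [← hcast k, zpow_natCast]
    have e1 : (n k : ℤ) = ⌈(k : ℝ) * rho + x⌉ := hcast k
    have e2 : (n (k+1) : ℤ) = ⌈((k+1 : ℕ) : ℝ) * rho + x⌉ := hcast (k+1)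
    rcases hsplit k with h | h
    · have hceq : ⌈((k+1 : ℕ) : ℝ) * rho + x⌉ = ⌈(k : ℝ) * rho + x⌉ := by omega
      have haeq : a (k+1) = a k := by simp only [ha, h]
      rw [hceq, haeq]
      simp
    · have hceq : ⌈((k+1 : ℕ) : ℝ) * rho + x⌉ = ⌈(k : ℝ) * rho + x⌉ + 1 := by omega
      have haeq : a (k+1) = a k + mu ^ (n k) := by
        simp only [ha, h, Finset.sum_range_succ]
      rw [hceq, haeq, hz]
      push_cast
      ring
  have hanneg : ∀ k, 0 ≤ a k := fun k => Finset.sum_nonneg fun l _ => by positivity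
  have hbound : ∀ k : ℕ, lam ^ k * a k ≤ M ^ (x+1) * (((k:ℝ) + (x+2)) * r ^ k) := by
    intro k
    have hnle : ((n k : ℝ)) ≤ (k:ℝ) * rho + (x+1) := by
      have h := Int.ceil_lt_add_one ((k:ℝ) * rho + x)
      have e : ((n k : ℝ)) = ((⌈(k:ℝ) * rho + x⌉ : ℤ) : ℝ) := by
        exact_mod_cast congrArg (Int.cast : ℤ → ℝ) (hcast k)
      rw [e]; linarith
    have hb1 : a k ≤ (n k : ℝ) * M ^ (n k) := by
      calc a k ≤ ∑ _l ∈ Finset.range (n k), M ^ (n k) := by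
            apply Finset.sum_le_sum
            intro l hl
            calc mu ^ l ≤ M ^ l := pow_le_pow_left₀ hmu.le hmuM l
              _ ≤ M ^ (n k) := pow_le_pow_right₀ hM1 (Finset.mem_range.mp hl).le
        _ = (n k : ℝ) * M ^ (n k) := by
            rw [Finset.sum_const, Finset.card_range, nsmul_eq_mul]
    have hb2 : (M:ℝ) ^ (n k) ≤ M ^ (x+1) * (M ^ rho) ^ k := by
      calc (M:ℝ) ^ (n k) = M ^ ((n k : ℝ)) := (Real.rpow_natCast M (n k)).symm
        _ ≤ M ^ ((k:ℝ) * rho + (x+1)) := Real.rpow_le_rpow_of_exponent_le hM1 hnle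
        _ = M ^ (rho * (k:ℝ)) * M ^ (x+1) := by
            rw [← Real.rpow_add hM0]; ring_nf
        _ = (M ^ rho) ^ k * M ^ (x+1) := by
            rw [Real.rpow_mul hM0.le, Real.rpow_natCast]
        _ = M ^ (x+1) * (M ^ rho) ^ k := by ring
    have hn2 : ((n k : ℝ)) ≤ (k:ℝ) + (x+2) := by
      have : (k:ℝ) * rho ≤ k := by nlinarith [Nat.cast_nonneg (α := ℝ) k]
      linarith
    have hk2 : (0:ℝ) ≤ (k:ℝ) + (x+2) := by
      have : (0:ℝ) ≤ (k:ℝ) := Nat.cast_nonneg k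
      linarith
    calc lam ^ k * a k ≤ lam ^ k * ((n k : ℝ) * M ^ (n k)) :=
          mul_le_mul_of_nonneg_left hb1 (by positivity)
      _ ≤ lam ^ k * (((k:ℝ) + (x+2)) * (M ^ (x+1) * (M ^ rho) ^ k)) := by
          apply mul_le_mul_of_nonneg_left _ (by positivity)
          exact mul_le_mul hn2 hb2 (by positivity) (by positivity)
      _ = M ^ (x+1) * (((k:ℝ) + (x+2)) * r ^ k) := by
          rw [hrdef, mul_pow]; ring
  have hsum : Summable fun k => lam ^ k * a k := by
    apply Summable.of_nonneg_of_le (fun k => mul_nonneg (by positivity) (hanneg k)) hbound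
    apply Summable.mul_left
    have hrn : ‖r‖ < 1 := by rw [Real.norm_eq_abs, abs_of_nonneg hr0]; exact hr1
    have s1 : Summable fun k : ℕ => (k:ℝ) * r ^ k := by
      have := summable_pow_mul_geometric_of_norm_lt_one 1 hrn
      simpa using this
    have s2 : Summable fun k : ℕ => (x+2) * r ^ k :=
      (summable_geometric_of_lt_one hr0 hr1).mul_left _
    exact (s1.add s2).congr (fun k => by ring)
  have hPhi : PhiHM rho lam mu x = ∑' k, lam ^ k * a k := by
    unfold PhiHM
    exact tsum_congr fun k => (Finset.mul_sum _ _ _).symm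
  have hx0 : (0:ℤ) ≤ ⌈x⌉ := by
    have hv : ((-1 : ℤ) : ℝ) < x := by push_cast; linarith
    have := Int.lt_ceil.mpr hv
    omega
  have hn0 : n 0 = (⌈x⌉).toNat := by simp [hn]
  have ha0 : a 0 = (if mu = 1 then (⌈x⌉:ℝ) else (1 - mu ^ ⌈x⌉) / (1 - mu)) := by
    simp only [ha, hn0]
    split_ifs with h
    · subst h
      simp only [one_pow, Finset.sum_const, Finset.card_range, nsmul_eq_mul, mul_one]
      exact_mod_cast congrArg (Int.cast : ℤ → ℝ) (Int.toNat_of_nonneg hx0)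
    · rw [geom_sum_eq h]
      have hze : mu ^ (⌈x⌉.toNat) = mu ^ ⌈x⌉ := by
        rw [← zpow_natCast, Int.toNat_of_nonneg hx0]
      rw [hze, show (1 - mu ^ ⌈x⌉) = -(mu ^ ⌈x⌉ - 1) by ring,
        show (1 - mu) = -(mu - 1) by ring, neg_div_neg_eq]
  clear_value n a
  have hsum1 : Summable (fun k => lam ^ k * a (k+1)) := by
    have h2 : Summable (fun k => lam ^ (k+1) * a (k+1)) :=
      (summable_nat_add_iff 1).mpr hsum
    exact (h2.mul_left lam⁻¹).congr (fun k => by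
      rw [pow_succ]; field_simp)
  rw [tsum_congr hterm, Summable.tsum_sub hsum1 hsum]
  have hshift : ∑' k, lam ^ k * a k = a 0 + ∑' k, lam ^ (k+1) * a (k+1) := by
    have := Summable.tsum_eq_zero_add hsum
    simpa using this
  have hT1 : ∑' k, lam ^ k * a (k+1) = lam⁻¹ * ((∑' k, lam ^ k * a k) - a 0) := by
    have e : ∀ k : ℕ, lam ^ k * a (k+1) = lam⁻¹ * (lam ^ (k+1) * a (k+1)) := fun k => by
      rw [pow_succ]; field_simp
    rw [tsum_congr e, tsum_mul_left]
    congr 1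
    linarith [hshift]
  rw [hT1, hPhi, ← ha0]
  field_simp
  ring
end

section
/- Let 0 < λ < 1, μ > 0, 0 < ρ < r_{λ,μ}, and δ real. Then for all y, φ_{λ,μ,δ,ρ}(y) = ⌊y⌋ + δ/(1−λ) − ((δ − μ(λ+δ−1))/λ)·Φ_ρ(λ,μ,−{y}), where {y} denotes the fractional part of y. -/
/-- The conjugation function φ_{λ,μ,δ,ρ}. -/
noncomputable def phiFn (lam mu del rho y : ℝ) : ℝ :=
  (⌊y⌋ : ℝ) + (1 - del) / lam +
    ∑' k : ℕ, lam ^ k * mu ^ (⌊y⌋ - ⌊y - (k : ℝ) * rho⌋) *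
      ((lam + del - 1) / lam + ((⌊y - ((k : ℝ) + 1) * rho⌋ : ℝ) - (⌊y - (k : ℝ) * rho⌋ : ℝ)))

theorem stmt10 (lam mu del rho : ℝ) (hlam0 : 0 < lam) (hlam1 : lam < 1) (hmu : 0 < mu)
    (hrho0 : 0 < rho)
    (hrho1 : rho < if lam * mu < 1 then 1 else -Real.log lam / Real.log mu) :
    ∀ y : ℝ, phiFn lam mu del rho y =
      (⌊y⌋ : ℝ) + del / (1 - lam) -
        (del - mu * (lam + del - 1)) / lam * PhiHM rho lam mu (-(Int.fract y)) := by
  have hlamne : lam ≠ 0 := ne_of_gt hlam0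
  have h1lam : (0:ℝ) < 1 - lam := by linarith
  -- rho < 1
  have hrho1' : rho < 1 := by
    by_cases h : lam * mu < 1
    · simpa [h] using hrho1
    · have hge : (1:ℝ) ≤ lam * mu := not_lt.mp h
      have hmu1 : 1 < mu := by nlinarith
      have hlogmu : 0 < Real.log mu := Real.log_pos hmu1
      have hloglam : Real.log lam < 0 := Real.log_neg hlam0 hlam1
      have hsum : 0 ≤ Real.log lam + Real.log mu := by
        have h0 : Real.log 1 ≤ Real.log (lam * mu) :=
          Real.log_le_log (by norm_num) hge
        rwa [Real.log_one, Real.log_mul hlamne (ne_of_gt hmu)] at h0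
      have h2 : rho < -Real.log lam / Real.log mu := by simpa [h] using hrho1
      have h3 : -Real.log lam / Real.log mu ≤ 1 := by
        rw [div_le_one hlogmu]; linarith
      linarith
  -- the dominating geometric ratio
  set M : ℝ := max 1 mu with hMdef
  have hM1 : (1:ℝ) ≤ M := le_max_left _ _
  have hM0 : (0:ℝ) < M := lt_of_lt_of_le one_pos hM1
  set r : ℝ := lam * M ^ rho with hrdef
  have hr0 : 0 ≤ r := by positivity
  have hr1 : r < 1 := by
    by_cases hmu1 : mu ≤ 1
    · have : M = 1 := max_eq_left hmu1
      rw [hrdef, this, Real.one_rpow, mul_one]; exact hlam1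
    · push_neg at hmu1
      have hMmu : M = mu := max_eq_right (le_of_lt hmu1)
      rw [hrdef, hMmu]
      by_cases h : lam * mu < 1
      · have hlt : mu ^ rho < mu ^ (1:ℝ) :=
          Real.rpow_lt_rpow_of_exponent_lt hmu1 hrho1'
        rw [Real.rpow_one] at hlt
        have hpos : 0 < mu ^ rho := Real.rpow_pos_of_pos hmu rho
        nlinarith
      · have hlogmu : 0 < Real.log mu := Real.log_pos hmu1
        have h2 : rho < -Real.log lam / Real.log mu := by simpa [h] using hrho1
        have h3 : rho * Real.log mu < -Real.log lam := by
          rw [div_eq_mul_inv] at h2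
          calc rho * Real.log mu < (-Real.log lam * (Real.log mu)⁻¹) * Real.log mu := by
                exact mul_lt_mul_of_pos_right h2 hlogmu
            _ = -Real.log lam := by field_simp
        have hlogr : Real.log (lam * mu ^ rho) < 0 := by
          rw [Real.log_mul hlamne (ne_of_gt (Real.rpow_pos_of_pos hmu rho)),
            Real.log_rpow hmu]
          linarith
        have := Real.exp_lt_exp.mpr hlogr
        rwa [Real.exp_log (by positivity), Real.exp_zero] at this
  intro y
  set x : ℝ := Int.fract y with hxdef
  have hx0 : 0 ≤ x := Int.fract_nonneg y
  have hx1 : x < 1 := Int.fract_lt_one y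
  -- floor identity
  have hyfloor : ∀ t : ℝ, ⌊y - t⌋ = ⌊y⌋ - ⌈t - x⌉ := by
    intro t
    have hy : y - t = (⌊y⌋ : ℝ) + (x - t) := by
      rw [hxdef, Int.fract]; ring
    rw [hy, Int.floor_intCast_add]
    have : ⌊x - t⌋ = -⌈t - x⌉ := by
      rw [← Int.floor_neg]; norm_num
    rw [this]; ring
  set b : ℕ → ℕ := fun k => (⌈(k:ℝ) * rho - x⌉).toNat with hbdef
  have hceilnn : ∀ k : ℕ, 0 ≤ ⌈(k:ℝ) * rho - x⌉ := by
    intro k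
    have : (-1 : ℤ) < ⌈(k:ℝ) * rho - x⌉ := by
      rw [Int.lt_ceil]
      push_cast
      have : 0 ≤ (k:ℝ) * rho := by positivity
      linarith
    omega
  have hbcast : ∀ k : ℕ, ((b k : ℤ)) = ⌈(k:ℝ) * rho - x⌉ := fun k =>
    Int.toNat_of_nonneg (hceilnn k)
  have hb0 : b 0 = 0 := by
    have h1 : ⌈((0:ℕ):ℝ) * rho - x⌉ ≤ (0:ℤ) := Int.ceil_le.mpr (by push_cast; linarith)
    simp only [hbdef]
    omega
  -- step bounds
  have hstep : ∀ k : ℕ, b (k+1) = b k ∨ b (k+1) = b k + 1 := by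
    intro k
    have hmono : ⌈(k:ℝ) * rho - x⌉ ≤ ⌈((k+1:ℕ):ℝ) * rho - x⌉ := by
      apply Int.ceil_le_ceil
      push_cast
      nlinarith
    have hup : ⌈((k+1:ℕ):ℝ) * rho - x⌉ ≤ ⌈(k:ℝ) * rho - x⌉ + 1 := by
      rw [Int.ceil_le]
      push_cast
      have := Int.le_ceil ((k:ℝ) * rho - x)
      nlinarith
    have e1 := hbcast k
    have e2 := hbcast (k+1)
    omega
  -- size bounds
  have hble : ∀ k : ℕ, (b k : ℝ) ≤ (k:ℝ) * rho + 1 := by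
    intro k
    have h1 : ((⌈(k:ℝ) * rho - x⌉ : ℤ) : ℝ) < ((k:ℝ) * rho - x) + 1 := Int.ceil_lt_add_one _
    have h2 : ((b k : ℤ) : ℝ) = ((⌈(k:ℝ) * rho - x⌉ : ℤ) : ℝ) := by rw [hbcast k]
    push_cast at h2 ⊢
    rw [h2]; linarith
  have hblek : ∀ k : ℕ, b k ≤ k := by
    intro k
    have h1 : ⌈(k:ℝ) * rho - x⌉ ≤ (k : ℤ) := by
      rw [Int.ceil_le]
      push_cast
      nlinarith
    have := hbcast k
    omega
  -- the dominating bound on mu ^ b k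
  have hmupow : ∀ k : ℕ, mu ^ (b k) ≤ M * r ^ k / lam ^ k := by
    intro k
    have h1 : mu ^ (b k) ≤ M ^ (b k) := pow_le_pow_left₀ (le_of_lt hmu) (le_max_right 1 mu) _
    have h2 : M ^ (b k) = M ^ ((b k : ℝ)) := (Real.rpow_natCast M (b k)).symm
    have h3 : M ^ ((b k : ℝ)) ≤ M ^ ((k:ℝ) * rho + 1) :=
      Real.rpow_le_rpow_of_exponent_le hM1 (hble k)
    have h4 : M ^ ((k:ℝ) * rho + 1) = (M ^ rho) ^ k * M := by
      rw [Real.rpow_add hM0, Real.rpow_one, mul_comm (k:ℝ) rho, Real.rpow_mul (le_of_lt hM0),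
        Real.rpow_natCast]
    have h5 : (M ^ rho) ^ k * M = M * r ^ k / lam ^ k := by
      rw [hrdef, mul_pow]
      field_simp
    calc mu ^ (b k) ≤ M ^ (b k) := h1
      _ = M ^ ((b k : ℝ)) := h2
      _ ≤ M ^ ((k:ℝ) * rho + 1) := h3
      _ = M * r ^ k / lam ^ k := by rw [h4, h5]
  -- the series
  set S : ℕ → ℝ := fun k => ∑ l ∈ Finset.range (b k), mu ^ l with hSdef
  set f : ℕ → ℝ := fun k => lam ^ k * mu ^ (b k) with hfdef
  set g : ℕ → ℝ := fun k => lam ^ k * S k with hgdef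
  set g' : ℕ → ℝ := fun k => lam ^ k * S (k+1) with hg'def
  have hfb : ∀ k, f k ≤ M * r ^ k := by
    intro k
    have := hmupow k
    have hlp : (0:ℝ) < lam ^ k := by positivity
    calc f k = lam ^ k * mu ^ (b k) := rfl
      _ ≤ lam ^ k * (M * r ^ k / lam ^ k) := by
          exact mul_le_mul_of_nonneg_left this (le_of_lt hlp)
      _ = M * r ^ k := by field_simp
  have hgeo : Summable (fun k : ℕ => M * r ^ k) :=
    (summable_geometric_of_lt_one hr0 hr1).mul_left M
  have hf : Summable f :=
    Summable.of_nonneg_of_le (fun k => by positivity) hfb hgeo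
  have hSb : ∀ k, S k ≤ (k:ℝ) * (M * r ^ k / lam ^ k) := by
    intro k
    have hterm : ∀ l ∈ Finset.range (b k), mu ^ l ≤ M * r ^ k / lam ^ k := by
      intro l hl
      have hlk : l ≤ b k := le_of_lt (Finset.mem_range.mp hl)
      calc mu ^ l ≤ M ^ l := pow_le_pow_left₀ (le_of_lt hmu) (le_max_right 1 mu) _
        _ ≤ M ^ (b k) := pow_le_pow_right₀ hM1 hlk
        _ = M ^ ((b k : ℝ)) := (Real.rpow_natCast M (b k)).symm
        _ ≤ M ^ ((k:ℝ) * rho + 1) := Real.rpow_le_rpow_of_exponent_le hM1 (hble k)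
        _ = M * r ^ k / lam ^ k := by
            rw [Real.rpow_add hM0, Real.rpow_one, mul_comm (k:ℝ) rho,
              Real.rpow_mul (le_of_lt hM0), Real.rpow_natCast, hrdef, mul_pow]
            field_simp
    calc S k ≤ (Finset.range (b k)).card • (M * r ^ k / lam ^ k) :=
          Finset.sum_le_card_nsmul _ _ _ hterm
      _ = (b k : ℝ) * (M * r ^ k / lam ^ k) := by
          rw [Finset.card_range, nsmul_eq_mul]
      _ ≤ (k:ℝ) * (M * r ^ k / lam ^ k) := by
          apply mul_le_mul_of_nonneg_right
          · exact_mod_cast hblek k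
          · positivity
  have hgb : ∀ k, g k ≤ (k:ℝ) * (M * r ^ k) := by
    intro k
    have hlp : (0:ℝ) < lam ^ k := by positivity
    calc g k = lam ^ k * S k := rfl
      _ ≤ lam ^ k * ((k:ℝ) * (M * r ^ k / lam ^ k)) := by
          apply mul_le_mul_of_nonneg_left (hSb k) (le_of_lt hlp)
      _ = (k:ℝ) * (M * r ^ k) := by field_simp
  have hgeo2 : Summable (fun k : ℕ => (k:ℝ) * (M * r ^ k)) := by
    have h := summable_pow_mul_geometric_of_norm_lt_one (R := ℝ) 1 (by
      rwa [Real.norm_eq_abs, abs_of_nonneg hr0] : ‖r‖ < 1)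
    have := h.mul_left M
    apply this.congr
    intro k; simp; ring
  have hSnn : ∀ k, 0 ≤ S k := fun k => Finset.sum_nonneg (fun l _ => by positivity)
  have hg : Summable g := by
    apply Summable.of_nonneg_of_le
      (fun k => mul_nonneg (by positivity) (hSnn k)) hgb hgeo2
  have hgshift : Summable (fun k => g (k+1)) := by
    rw [← summable_nat_add_iff 1] at hg
    exact hg
  have hg' : Summable g' := by
    have : g' = fun k => lam⁻¹ * g (k+1) := by
      funext k
      simp only [hg'def, hgdef]
      rw [pow_succ]
      field_simp
    rw [this]
    exact hgshift.mul_left _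
  -- tsum g' = tsum g / lam
  have hg'val : ∑' k, g' k = (∑' k, g k) / lam := by
    have h0 : g 0 = 0 := by
      simp only [hgdef, hSdef, hb0]
      simp
    have hsplit : ∑' k, g k = g 0 + ∑' k, g (k+1) := Summable.tsum_eq_zero_add hg
    have h1 : ∑' k, g' k = lam⁻¹ * ∑' k, g (k+1) := by
      rw [← tsum_mul_left]
      apply tsum_congr
      intro k
      simp only [hg'def, hgdef, pow_succ]
      field_simp
    rw [h0, zero_add] at hsplit
    rw [h1, ← hsplit, inv_mul_eq_div]
  -- tsum f in terms of tsum g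
  have hA : ∑' k, f k = (1 - lam)⁻¹ + (mu - 1) * ∑' k, g k := by
    have hpt : ∀ k, f k = lam ^ k + (mu - 1) * g k := by
      intro k
      have hgs := geom_sum_mul mu (b k)
      simp only [hfdef, hgdef, hSdef] at *
      linear_combination (-lam ^ k) * hgs
    rw [tsum_congr hpt,
      Summable.tsum_add (summable_geometric_of_lt_one (le_of_lt hlam0) hlam1) (hg.mul_left _),
      tsum_geometric_of_lt_one (le_of_lt hlam0) hlam1, tsum_mul_left]
  -- key telescoping identity
  have hW : ∀ k, lam ^ k * mu ^ (b k) * ((b (k+1) : ℝ) - (b k : ℝ)) = g' k - g k := by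
    intro k
    rcases hstep k with h | h
    · simp [hg'def, hgdef, hSdef, h]
    · have hS1 : S (k+1) = S k + mu ^ (b k) := by
        simp only [hSdef, h, Finset.sum_range_succ]
      have hc : ((b (k+1) : ℝ)) = (b k : ℝ) + 1 := by rw [h]; push_cast; ring
      simp only [hg'def, hgdef, hS1, hc]
      ring
  -- pointwise identity for the phi series
  have hterm : ∀ k : ℕ,
      lam ^ k * mu ^ (⌊y⌋ - ⌊y - (k : ℝ) * rho⌋) *
        ((lam + del - 1) / lam + ((⌊y - ((k : ℝ) + 1) * rho⌋ : ℝ) - (⌊y - (k : ℝ) * rho⌋ : ℝ)))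
      = (lam + del - 1) / lam * f k - (g' k - g k) := by
    intro k
    have e1 : ⌊y⌋ - ⌊y - (k:ℝ) * rho⌋ = (b k : ℤ) := by
      rw [hyfloor, hbcast]; ring
    have e2 : ⌊y - ((k:ℝ)+1) * rho⌋ = ⌊y⌋ - (b (k+1) : ℤ) := by
      have hcast : ((k:ℝ)+1) = ((k+1 : ℕ) : ℝ) := by push_cast; ring
      rw [hcast, hyfloor, hbcast]
    have e3 : ⌊y - (k:ℝ) * rho⌋ = ⌊y⌋ - (b k : ℤ) := by rw [hyfloor, hbcast]
    rw [e1, e2, e3, zpow_natCast]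
    push_cast
    simp only [hfdef]
    linear_combination -(hW k)
  -- the tsum of the phi series
  have hsum_term : (∑' k : ℕ, lam ^ k * mu ^ (⌊y⌋ - ⌊y - (k : ℝ) * rho⌋) *
        ((lam + del - 1) / lam + ((⌊y - ((k : ℝ) + 1) * rho⌋ : ℝ) - (⌊y - (k : ℝ) * rho⌋ : ℝ))))
      = (lam + del - 1) / lam * (∑' k, f k) - ((∑' k, g' k) - ∑' k, g k) := by
    rw [tsum_congr hterm,
      Summable.tsum_sub (hf.mul_left _) (hg'.sub hg), tsum_mul_left,
      Summable.tsum_sub hg' hg]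
  have hPhi : PhiHM rho lam mu (-x) = ∑' k, g k := by
    unfold PhiHM
    apply tsum_congr
    intro k
    have hbx : (⌈(k:ℝ) * rho + -x⌉).toNat = b k := by
      rw [← sub_eq_add_neg]
    rw [hbx]
    simp only [hgdef, hSdef, Finset.mul_sum]
  unfold phiFn
  rw [hsum_term, hA, hg'val, hPhi]
  have h1lamne : (1:ℝ) - lam ≠ 0 := ne_of_gt h1lam
  field_simp
  ring
end

section
/- Let ρ be irrational with 0 < ρ < r_{λ,μ}, δ = δ(λ,μ,ρ) and φ = φ_{λ,μ,δ,ρ}. Then φ(0) = 0 and φ(1−ρ) = (1−δ)/λ. -/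
/- ### Auxiliary definitions -/

/-- `GG k = λ^(k+1) μ^⌊(k+1)ρ⌋`. -/
noncomputable def GG (lam mu rho : ℝ) (k : ℕ) : ℝ :=
  lam ^ (k + 1) * mu ^ ⌊((k : ℝ) + 1) * rho⌋

/-- `DD k = ⌊(k+2)ρ⌋ - ⌊(k+1)ρ⌋` as a real. -/
noncomputable def DD (rho : ℝ) (k : ℕ) : ℝ :=
  ((⌊((k : ℝ) + 2) * rho⌋ - ⌊((k : ℝ) + 1) * rho⌋ : ℤ) : ℝ)

lemma floor_neg_irr {x : ℝ} (h : Irrational x) : ⌊-x⌋ = -⌊x⌋ - 1 := by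
  rw [Int.floor_eq_iff]
  constructor
  · push_cast
    linarith [Int.lt_floor_add_one x]
  · push_cast
    have h1 : (⌊x⌋ : ℝ) ≤ x := Int.floor_le x
    have h2 : (⌊x⌋ : ℝ) ≠ x := fun he => h.ne_int ⌊x⌋ he.symm
    have := lt_of_le_of_ne h1 h2
    linarith

lemma floor_one_sub_irr {x : ℝ} (h : Irrational x) : ⌊1 - x⌋ = -⌊x⌋ := by
  rw [show (1 : ℝ) - x = -x + 1 by ring, Int.floor_add_one, floor_neg_irr h]
  ring

lemma floor_step {rho : ℝ} (h0 : 0 < rho) (h1 : rho < 1) (x : ℝ) :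
    ⌊x + rho⌋ = ⌊x⌋ ∨ ⌊x + rho⌋ = ⌊x⌋ + 1 := by
  have l1 : ⌊x⌋ ≤ ⌊x + rho⌋ := Int.floor_le_floor (by linarith)
  have l2 : ⌊x + rho⌋ ≤ ⌊x⌋ + 1 := by
    have h := Int.floor_le_floor (show x + rho ≤ x + 1 by linarith)
    rwa [Int.floor_add_one] at h
  omega

theorem stmt12 (lam mu rho : ℝ) (hlam0 : 0 < lam) (hlam1 : lam < 1) (hmu : 0 < mu)
    (hrho0 : 0 < rho)
    (hrho1 : rho < if lam * mu < 1 then 1 else -Real.log lam / Real.log mu)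
    (hirr : Irrational rho) :
    phiFn lam mu (deltaFn lam mu rho) rho 0 = 0 ∧
    phiFn lam mu (deltaFn lam mu rho) rho (1 - rho) = (1 - deltaFn lam mu rho) / lam := by
  -- ρ < 1
  have hrholt1 : rho < 1 := by
    by_cases hc : lam * mu < 1
    · rw [if_pos hc] at hrho1; exact hrho1
    · rw [if_neg hc] at hrho1
      push_neg at hc
      have hmu1 : 1 < mu := by nlinarith
      have hlog : 0 < Real.log mu := Real.log_pos hmu1
      have hle : lam⁻¹ ≤ mu := by
        rw [inv_eq_one_div, div_le_iff₀ hlam0]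
        linarith [mul_comm lam mu]
      have : -Real.log lam ≤ Real.log mu := by
        rw [← Real.log_inv]
        exact Real.log_le_log (by positivity) hle
      have : -Real.log lam / Real.log mu ≤ 1 := by
        rw [div_le_one hlog]; exact this
      linarith
  -- geometric bound
  set M : ℝ := max 1 mu with hMdef
  have hM1 : (1 : ℝ) ≤ M := le_max_left _ _
  have hM0 : (0 : ℝ) < M := by linarith
  have hMmu : mu ≤ M := le_max_right _ _
  have hq0 : (0 : ℝ) < lam * M ^ rho := mul_pos hlam0 (Real.rpow_pos_of_pos hM0 _)
  have hq1 : lam * M ^ rho < 1 := by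
    rcases le_or_gt mu 1 with h | h
    · rw [hMdef, max_eq_left h, Real.one_rpow, mul_one]; exact hlam1
    · rw [hMdef, max_eq_right h.le]
      by_cases hc : lam * mu < 1
      · rw [if_pos hc] at hrho1
        have h2 : mu ^ rho < mu ^ (1 : ℝ) := Real.rpow_lt_rpow_of_exponent_lt h hrho1
        rw [Real.rpow_one] at h2
        nlinarith [Real.rpow_pos_of_pos hmu rho]
      · rw [if_neg hc] at hrho1
        push_neg at hc
        have hmu1 : 1 < mu := by nlinarith
        have hlog : 0 < Real.log mu := Real.log_pos hmu1
        have h2 : rho * Real.log mu < -Real.log lam := (lt_div_iff₀ hlog).mp hrho1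
        have hmurho : mu ^ rho < lam⁻¹ := by
          rw [Real.rpow_def_of_pos hmu]
          have h3 : Real.exp (Real.log mu * rho) < Real.exp (-Real.log lam) :=
            Real.exp_lt_exp.mpr (by linarith [mul_comm rho (Real.log mu)])
          rwa [Real.exp_neg, Real.exp_log hlam0] at h3
        calc lam * mu ^ rho < lam * lam⁻¹ := by
              exact mul_lt_mul_of_pos_left hmurho hlam0
          _ = 1 := mul_inv_cancel₀ hlam0.ne'
  -- basic floor facts
  have hρfloor : ⌊rho⌋ = 0 := Int.floor_eq_zero_iff.mpr ⟨hrho0.le, hrholt1⟩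
  have hirrk : ∀ k : ℕ, Irrational (((k : ℝ) + 1) * rho) := by
    intro k
    have : Irrational (((k + 1 : ℕ) : ℝ) * rho) := hirr.natCast_mul (Nat.succ_ne_zero k)
    rwa [show (((k + 1 : ℕ) : ℝ)) = (k : ℝ) + 1 by push_cast; ring] at this
  -- the basic summable family
  set F : ℕ → ℝ := fun k => lam ^ k * mu ^ ⌊(k : ℝ) * rho⌋ with hFdef
  have hFpos : ∀ k, 0 < F k := fun k =>
    mul_pos (pow_pos hlam0 k) (zpow_pos hmu _)
  have hbound : ∀ k, F k ≤ (lam * M ^ rho) ^ k := by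
    intro k
    have hfl0 : (0 : ℤ) ≤ ⌊(k : ℝ) * rho⌋ := Int.floor_nonneg.mpr (by positivity)
    have s1 : mu ^ ⌊(k : ℝ) * rho⌋ ≤ M ^ ⌊(k : ℝ) * rho⌋ := by
      obtain ⟨n, hn⟩ := Int.eq_ofNat_of_zero_le hfl0
      rw [hn, zpow_natCast, zpow_natCast]
      exact pow_le_pow_left₀ hmu.le hMmu n
    have s2 : M ^ ⌊(k : ℝ) * rho⌋ ≤ (M ^ rho) ^ k := by
      have e1 : M ^ ⌊(k : ℝ) * rho⌋ = M ^ ((⌊(k : ℝ) * rho⌋ : ℤ) : ℝ) :=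
        (Real.rpow_intCast M _).symm
      have e2 : ((M ^ rho) ^ k : ℝ) = M ^ ((k : ℝ) * rho) := by
        rw [← Real.rpow_natCast (M ^ rho) k, ← Real.rpow_mul hM0.le, mul_comm]
      rw [e1, e2]
      exact Real.rpow_le_rpow_of_exponent_le hM1 (Int.floor_le _)
    calc F k = lam ^ k * mu ^ ⌊(k : ℝ) * rho⌋ := rfl
      _ ≤ lam ^ k * (M ^ rho) ^ k := by
          exact mul_le_mul_of_nonneg_left (s1.trans s2) (pow_nonneg hlam0.le k)
      _ = (lam * M ^ rho) ^ k := (mul_pow _ _ _).symm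
  have hFs : Summable F :=
    Summable.of_nonneg_of_le (fun k => (hFpos k).le) hbound
      (summable_geometric_of_lt_one hq0.le hq1)
  -- G and D
  have hGF : ∀ k, GG lam mu rho k = F (k + 1) := by
    intro k
    rw [hFdef]
    simp only [GG]
    rw [show (((k + 1 : ℕ)) : ℝ) = (k : ℝ) + 1 by push_cast; ring]
  have hGpos : ∀ k, 0 < GG lam mu rho k := fun k => (hGF k) ▸ hFpos (k + 1)
  have hGs : Summable (GG lam mu rho) := by
    have : Summable (fun k => F (k + 1)) := (summable_nat_add_iff 1).mpr hFs
    exact this.congr fun k => (hGF k).symm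
  -- D is 0 or 1
  have hDD : ∀ k : ℕ, DD rho k = 0 ∧ ⌊((k : ℝ) + 2) * rho⌋ = ⌊((k : ℝ) + 1) * rho⌋ ∨
      DD rho k = 1 ∧ ⌊((k : ℝ) + 2) * rho⌋ = ⌊((k : ℝ) + 1) * rho⌋ + 1 := by
    intro k
    have h := floor_step hrho0 hrholt1 (((k : ℝ) + 1) * rho)
    rw [show ((k : ℝ) + 1) * rho + rho = ((k : ℝ) + 2) * rho by ring] at h
    rcases h with h | h
    · left; exact ⟨by simp [DD, h], h⟩
    · right; exact ⟨by simp [DD, h], h⟩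
  have hD0 : ∀ k, 0 ≤ DD rho k := by
    intro k; rcases hDD k with ⟨h, _⟩ | ⟨h, _⟩ <;> rw [h] <;> norm_num
  have hD1 : ∀ k, DD rho k ≤ 1 := by
    intro k; rcases hDD k with ⟨h, _⟩ | ⟨h, _⟩ <;> rw [h] <;> norm_num
  -- σ
  have hσs : Summable (fun k => DD rho k * GG lam mu rho k) := by
    apply Summable.of_nonneg_of_le
      (fun k => mul_nonneg (hD0 k) (hGpos k).le)
      (fun k => ?_) hGs
    calc DD rho k * GG lam mu rho k ≤ 1 * GG lam mu rho k :=
          mul_le_mul_of_nonneg_right (hD1 k) (hGpos k).le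
      _ = GG lam mu rho k := one_mul _
  set σ : ℝ := sigmaFn lam mu rho with hσdef
  have hσeq : σ = ∑' k, DD rho k * GG lam mu rho k := by
    rw [hσdef]
    unfold sigmaFn
    exact tsum_congr fun k => by simp only [DD, GG]; ring
  have hσ0 : 0 ≤ σ := by
    rw [hσeq]
    exact tsum_nonneg fun k => mul_nonneg (hD0 k) (hGpos k).le
  -- S
  set S : ℝ := ∑' k, GG lam mu rho k with hSdef
  have hSpos : 0 < S := by
    have h1 : GG lam mu rho 0 ≤ S :=
      Summable.le_tsum hGs 0 fun j _ => (hGpos j).le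
    have h2 : GG lam mu rho 0 = lam := by
      simp only [GG]
      norm_num [hρfloor]
    linarith [hGpos 0]
  -- key identity (1-λ) S = λ (1 + (μ-1) σ)
  have hTpt : ∀ k : ℕ, lam ^ (k + 1) * mu ^ ⌊((k : ℝ) + 2) * rho⌋ =
      GG lam mu rho k + (mu - 1) * (DD rho k * GG lam mu rho k) := by
    intro k
    rcases hDD k with ⟨h, hf⟩ | ⟨h, hf⟩
    · rw [hf, h]; simp [GG]
    · rw [hf, h, zpow_add_one₀ hmu.ne']
      simp only [GG]; ring
  have hTs : Summable (fun k : ℕ => lam ^ (k + 1) * mu ^ ⌊((k : ℝ) + 2) * rho⌋) :=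
    (hGs.add (hσs.mul_left _)).congr fun k => (hTpt k).symm
  have hT : (∑' k : ℕ, lam ^ (k + 1) * mu ^ ⌊((k : ℝ) + 2) * rho⌋) = S + (mu - 1) * σ := by
    calc (∑' k : ℕ, lam ^ (k + 1) * mu ^ ⌊((k : ℝ) + 2) * rho⌋)
        = ∑' k, (GG lam mu rho k + (mu - 1) * (DD rho k * GG lam mu rho k)) :=
          tsum_congr hTpt
      _ = S + (mu - 1) * σ := by
          rw [Summable.tsum_add hGs (hσs.mul_left _), tsum_mul_left, hσeq, hSdef]
  have hlamT : lam * (∑' k : ℕ, lam ^ (k + 1) * mu ^ ⌊((k : ℝ) + 2) * rho⌋) = S - lam := by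
    have h1 : (fun k : ℕ => lam * (lam ^ (k + 1) * mu ^ ⌊((k : ℝ) + 2) * rho⌋)) =
        fun k => GG lam mu rho (k + 1) := by
      funext k
      simp only [GG]
      rw [show (((k + 1 : ℕ)) : ℝ) = (k : ℝ) + 1 by push_cast; ring]
      ring
    rw [← tsum_mul_left, h1]
    have h2 : S = GG lam mu rho 0 + ∑' k, GG lam mu rho (k + 1) := Summable.tsum_eq_zero_add hGs
    have h3 : GG lam mu rho 0 = lam := by simp only [GG]; norm_num [hρfloor]
    rw [h2, h3]; ring
  have hkey1 : (1 - lam) * S = lam * (1 + (mu - 1) * σ) := by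
    have := hlamT
    rw [hT] at this
    ring_nf at this ⊢
    linarith
  have hDen : 0 < 1 + (mu - 1) * σ := by
    nlinarith [mul_pos (show (0:ℝ) < 1 - lam by linarith) hSpos]
  -- δ and C
  set δ : ℝ := deltaFn lam mu rho with hδdef
  have hδ : δ = (1 - lam) * (1 + mu * σ) / (1 + (mu - 1) * σ) := by
    rw [hδdef]; unfold deltaFn; rw [← hσdef]
  have hδ1 : lam + δ - 1 = (1 - lam) * σ / (1 + (mu - 1) * σ) := by
    rw [hδ, eq_div_iff hDen.ne', sub_mul, add_mul, div_mul_cancel₀ _ hDen.ne']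
    ring
  have hCS : (lam + δ - 1) * S = lam * σ := by
    rw [hδ1, div_mul_eq_mul_div, div_eq_iff hDen.ne']
    linear_combination σ * hkey1
  -- the central zero sum
  set Z : ℕ → ℝ := fun k => GG lam mu rho k * ((lam + δ - 1) / lam - DD rho k) with hZdef
  have hZpt : ∀ k, Z k = (lam + δ - 1) / lam * GG lam mu rho k - DD rho k * GG lam mu rho k := by
    intro k; rw [hZdef]; ring
  have hZs : Summable Z :=
    ((hGs.mul_left _).sub hσs).congr fun k => (hZpt k).symm
  have hZsum : ∑' k, Z k = 0 := by
    calc ∑' k, Z k = ∑' k, ((lam + δ - 1) / lam * GG lam mu rho k - DD rho k * GG lam mu rho k) :=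
          tsum_congr hZpt
      _ = (lam + δ - 1) / lam * S - σ := by
          rw [Summable.tsum_sub (hGs.mul_left _) hσs, tsum_mul_left, hσeq, hSdef]
      _ = 0 := by
          rw [div_mul_eq_mul_div, hCS, mul_comm, mul_div_assoc, div_self hlam0.ne', mul_one]
          ring
  constructor
  · -- φ(0) = 0
    unfold phiFn
    have main : (∑' k : ℕ, lam ^ k * mu ^ (⌊(0:ℝ)⌋ - ⌊(0:ℝ) - (k : ℝ) * rho⌋) *
        ((lam + δ - 1) / lam + ((⌊(0:ℝ) - ((k : ℝ) + 1) * rho⌋ : ℝ) - (⌊(0:ℝ) - (k : ℝ) * rho⌋ : ℝ))))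
        = (lam + δ - 1) / lam - 1 := by
      set g : ℕ → ℝ := fun k => lam ^ k * mu ^ (⌊(0:ℝ)⌋ - ⌊(0:ℝ) - (k : ℝ) * rho⌋) *
        ((lam + δ - 1) / lam + ((⌊(0:ℝ) - ((k : ℝ) + 1) * rho⌋ : ℝ) - (⌊(0:ℝ) - (k : ℝ) * rho⌋ : ℝ)))
        with hgdef
      have hgsucc : ∀ k : ℕ, g (k + 1) = mu * Z k := by
        intro k
        have e1 : ⌊(0:ℝ) - ((k + 1 : ℕ) : ℝ) * rho⌋ = -⌊((k : ℝ) + 1) * rho⌋ - 1 := by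
          rw [zero_sub, show (((k + 1 : ℕ)) : ℝ) = (k : ℝ) + 1 by push_cast; ring]
          exact floor_neg_irr (hirrk k)
        have e2 : ⌊(0:ℝ) - (((k + 1 : ℕ) : ℝ) + 1) * rho⌋ = -⌊((k : ℝ) + 2) * rho⌋ - 1 := by
          rw [zero_sub, show ((((k + 1 : ℕ)) : ℝ) + 1) = (k : ℝ) + 2 by push_cast; ring]
          have := floor_neg_irr (hirrk (k + 1))
          rwa [show (((k + 1 : ℕ) : ℝ) + 1) = (k : ℝ) + 2 by push_cast; ring] at this
        rw [hgdef]
        simp only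
        rw [e1, e2, Int.floor_zero]
        have e3 : (0 : ℤ) - (-⌊((k : ℝ) + 1) * rho⌋ - 1) = ⌊((k : ℝ) + 1) * rho⌋ + 1 := by ring
        rw [e3, zpow_add_one₀ hmu.ne']
        rw [hZdef]
        simp only [GG, DD]
        push_cast
        ring
      have hgs : Summable g := by
        apply (summable_nat_add_iff 1).mp
        exact (hZs.mul_left mu).congr fun k => (hgsucc k).symm
      have hg0 : g 0 = (lam + δ - 1) / lam - 1 := by
        have e2 : ⌊(0:ℝ) - (((0 : ℕ) : ℝ) + 1) * rho⌋ = -1 := by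
          rw [show (0:ℝ) - (((0 : ℕ) : ℝ) + 1) * rho = -rho by push_cast; ring,
            floor_neg_irr hirr, hρfloor]
          norm_num
        rw [hgdef]
        simp only
        rw [e2]
        norm_num
        ring
      calc (∑' k, g k) = g 0 + ∑' k, g (k + 1) := Summable.tsum_eq_zero_add hgs
        _ = ((lam + δ - 1) / lam - 1) + mu * ∑' k, Z k := by
            rw [hg0, tsum_congr hgsucc, tsum_mul_left]
        _ = (lam + δ - 1) / lam - 1 := by rw [hZsum]; ring
    rw [main, Int.floor_zero]
    push_cast
    field_simp
    ring
  · -- φ(1-ρ) = (1-δ)/λ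
    unfold phiFn
    have hfl0 : ⌊(1 : ℝ) - rho⌋ = 0 :=
      Int.floor_eq_zero_iff.mpr ⟨by linarith, by linarith⟩
    have main : (∑' k : ℕ, lam ^ k * mu ^ (⌊(1:ℝ) - rho⌋ - ⌊(1:ℝ) - rho - (k : ℝ) * rho⌋) *
        ((lam + δ - 1) / lam +
          ((⌊(1:ℝ) - rho - ((k : ℝ) + 1) * rho⌋ : ℝ) - (⌊(1:ℝ) - rho - (k : ℝ) * rho⌋ : ℝ)))) = 0 := by
      have hpt : ∀ k : ℕ, lam ^ k * mu ^ (⌊(1:ℝ) - rho⌋ - ⌊(1:ℝ) - rho - (k : ℝ) * rho⌋) *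
          ((lam + δ - 1) / lam +
            ((⌊(1:ℝ) - rho - ((k : ℝ) + 1) * rho⌋ : ℝ) - (⌊(1:ℝ) - rho - (k : ℝ) * rho⌋ : ℝ)))
          = lam⁻¹ * Z k := by
        intro k
        have e1 : ⌊(1:ℝ) - rho - (k : ℝ) * rho⌋ = -⌊((k : ℝ) + 1) * rho⌋ := by
          rw [show (1:ℝ) - rho - (k : ℝ) * rho = 1 - ((k : ℝ) + 1) * rho by ring]
          exact floor_one_sub_irr (hirrk k)
        have e2 : ⌊(1:ℝ) - rho - ((k : ℝ) + 1) * rho⌋ = -⌊((k : ℝ) + 2) * rho⌋ := by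
          rw [show (1:ℝ) - rho - ((k : ℝ) + 1) * rho = 1 - (((k + 1 : ℕ) : ℝ) + 1) * rho by
            push_cast; ring]
          have := floor_one_sub_irr (hirrk (k + 1))
          rw [this, show (((k + 1 : ℕ) : ℝ) + 1) = (k : ℝ) + 2 by push_cast; ring]
        rw [e1, e2, hfl0]
        have e3 : (0 : ℤ) - -⌊((k : ℝ) + 1) * rho⌋ = ⌊((k : ℝ) + 1) * rho⌋ := by ring
        rw [e3, hZdef]
        simp only [GG, DD]
        rw [pow_succ]
        push_cast
        field_simp
        ring
      rw [tsum_congr hpt, tsum_mul_left, hZsum, mul_zero]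
    rw [main, hfl0]
    push_cast
    ring
end

section
/- Let p, q be coprime positive integers with p < q and 0 < p/q < r_{λ,μ}. Then σ(λ,μ,p/q) = (S + λ^{q−1}μ^{p−1})/(1 − λ^q μ^p), where S = Σ_{k=1}^{q−2} (⌊(k+1)p/q⌋ − ⌊kp/q⌋) λ^k μ^{⌊kp/q⌋} (with S = 0 when q = 2). -/
set_option maxHeartbeats 1000000


theorem stmt13 (lam mu : ℝ) (p q : ℕ) (hlam0 : 0 < lam) (hlam1 : lam < 1) (hmu : 0 < mu)
    (hp : 0 < p) (hq : 0 < q) (hpq : p < q) (hcop : Nat.Coprime p q)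
    (hr : (p : ℝ) / q < if lam * mu < 1 then 1 else -Real.log lam / Real.log mu) :
    sigmaFn lam mu ((p : ℝ) / q) =
      ((∑ k ∈ Finset.Icc 1 (q - 2),
          ((⌊((k : ℝ) + 1) * p / q⌋ - ⌊(k : ℝ) * p / q⌋ : ℤ) : ℝ) *
            lam ^ k * mu ^ ⌊(k : ℝ) * p / q⌋) + lam ^ (q - 1) * mu ^ (p - 1)) /
        (1 - lam ^ q * mu ^ p) := by
  have hq2 : 2 ≤ q := by omega
  set rho : ℝ := (p : ℝ) / q with hrho
  have hqR : (0 : ℝ) < q := by positivity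
  have hmune : mu ≠ 0 := ne_of_gt hmu
  have hrho0 : 0 < rho := by positivity
  have hrho1 : rho < 1 := by
    rw [hrho, div_lt_one hqR]; exact_mod_cast hpq
  set x : ℝ := lam ^ q * mu ^ p with hxdef
  have hx0 : 0 ≤ x := by positivity
  have hx1 : x < 1 := by
    split_ifs at hr with h
    · have h1 : x = lam ^ (q - p) * (lam * mu) ^ p := by
        rw [hxdef, mul_pow, ← mul_assoc, ← pow_add]
        congr 2
        omega
      rw [h1]
      calc lam ^ (q - p) * (lam * mu) ^ p
          ≤ 1 * (lam * mu) ^ p :=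
            mul_le_mul_of_nonneg_right (pow_le_one₀ hlam0.le hlam1.le) (by positivity)
        _ = (lam * mu) ^ p := one_mul _
        _ < 1 := pow_lt_one₀ (by positivity) h (by omega)
    · push_neg at h
      have hmu1 : 1 < mu := by nlinarith
      have hlog : 0 < Real.log mu := Real.log_pos hmu1
      rw [div_lt_div_iff₀ hqR hlog] at hr
      have hxpos : 0 < x := by positivity
      rw [← Real.log_neg_iff hxpos, hxdef,
        Real.log_mul (by positivity) (by positivity), Real.log_pow, Real.log_pow]
      push_cast
      nlinarith
  -- the summand
  set F : ℕ → ℝ := fun k => ((⌊((k : ℝ) + 2) * rho⌋ - ⌊((k : ℝ) + 1) * rho⌋ : ℤ) : ℝ) *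
    lam ^ (k + 1) * mu ^ ⌊((k : ℝ) + 1) * rho⌋ with hF
  have hF0 : ∀ k, 0 ≤ F k := by
    intro k
    have hfl : (0 : ℝ) ≤ ((⌊((k : ℝ) + 2) * rho⌋ - ⌊((k : ℝ) + 1) * rho⌋ : ℤ) : ℝ) := by
      have : ⌊((k : ℝ) + 1) * rho⌋ ≤ ⌊((k : ℝ) + 2) * rho⌋ := by
        apply Int.floor_le_floor
        nlinarith
      exact_mod_cast Int.sub_nonneg.2 this
    simp only [hF]
    exact mul_nonneg (mul_nonneg hfl (by positivity)) (by positivity)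
  -- key floor identity
  have key_floor : ∀ m n : ℕ, ⌊((m * q + n : ℕ) : ℝ) * rho⌋ = (m * p : ℤ) + ⌊(n : ℝ) * rho⌋ := by
    intro m n
    have h1 : ((m * q + n : ℕ) : ℝ) * rho = ((m * p : ℤ) : ℝ) + (n : ℝ) * rho := by
      rw [hrho]
      field_simp
      push_cast; ring
    rw [h1, Int.floor_intCast_add]
  -- periodicity of F
  have hFper : ∀ (m : ℕ) (j : ℕ), j < q → F (m * q + j) = F j * x ^ m := by
    intro m j hj
    have e1 : ((m * q + j : ℕ) : ℝ) + 1 = ((m * q + (j + 1) : ℕ) : ℝ) := by push_cast; ring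
    have e2 : ((m * q + j : ℕ) : ℝ) + 2 = ((m * q + (j + 2) : ℕ) : ℝ) := by push_cast; ring
    have e1' : ((j : ℝ) + 1) = ((j + 1 : ℕ) : ℝ) := by push_cast; ring
    have e2' : ((j : ℝ) + 2) = ((j + 2 : ℕ) : ℝ) := by push_cast; ring
    rw [hF]
    simp only [e1, e2, e1', e2', key_floor]
    have hmu_pow : mu ^ ((m * p : ℤ) + ⌊((j + 1 : ℕ) : ℝ) * rho⌋) =
        (mu ^ p) ^ m * mu ^ ⌊((j + 1 : ℕ) : ℝ) * rho⌋ := by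
      rw [zpow_add₀ hmune]
      congr 1
      rw [show ((m * p : ℤ)) = ((m * p : ℕ) : ℤ) by push_cast; ring, zpow_natCast, pow_mul']
    have hlam_pow : lam ^ (m * q + j + 1) = (lam ^ q) ^ m * lam ^ (j + 1) := by
      rw [← pow_mul', ← pow_add]
      congr 1 <;> omega
    rw [hmu_pow, hlam_pow, hxdef]
    push_cast
    ring
  -- reindex the tsum
  haveI : NeZero q := ⟨hq.ne'⟩
  have hGsum : Summable (fun mj : ℕ × Fin q => x ^ mj.1 * F mj.2) :=
    Summable.mul_of_nonneg (summable_geometric_of_lt_one hx0 hx1) Summable.of_finite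
      (fun m => by positivity) (fun j => hF0 _)
  have hre : sigmaFn lam mu rho = ∑' mj : ℕ × Fin q, x ^ mj.1 * F mj.2 := by
    have := ((Nat.divModEquiv q).symm).tsum_eq F
    rw [sigmaFn, ← hF]
    rw [← this]
    apply tsum_congr
    intro mj
    rw [Nat.divModEquiv_symm_apply, hFper mj.1 mj.2 mj.2.isLt, mul_comm]
  rw [hre, Summable.tsum_prod' hGsum (fun m => Summable.of_finite)]
  have hinner : ∀ m : ℕ, (∑' j : Fin q, x ^ m * F j) = x ^ m * ∑ j : Fin q, F j := by
    intro m
    rw [tsum_fintype, Finset.mul_sum]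
  simp only [hinner]
  rw [tsum_mul_right, tsum_geometric_of_lt_one hx0 hx1]
  -- now compute the finite sum
  obtain ⟨q', rfl⟩ : ∃ q', q = q' + 2 := ⟨q - 2, by omega⟩
  have hfloor_q : ⌊((q' + 2 : ℕ) : ℝ) * rho⌋ = (p : ℤ) := by
    rw [hrho]
    rw [show ((q' + 2 : ℕ) : ℝ) * ((p:ℝ) / (q' + 2 : ℕ)) = (p : ℝ) by field_simp]
    exact Int.floor_natCast p
  have hfloor_q1 : ⌊((q' + 1 : ℕ) : ℝ) * rho⌋ = (p : ℤ) - 1 := by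
    rw [Int.floor_eq_iff]
    have h1 : (0:ℝ) < (p:ℝ) / (q'+2:ℕ) := by positivity
    have h2 : (p:ℝ) / (q'+2:ℕ) ≤ 1 := by
      rw [div_le_one (by positivity)]
      exact_mod_cast hpq.le
    have he : ((q' + 1 : ℕ) : ℝ) * rho = (p : ℝ) - (p:ℝ) / (q'+2:ℕ) := by
      rw [hrho]; field_simp; push_cast; ring
    constructor
    · rw [he]; push_cast at h1 h2 ⊢; linarith
    · rw [he]; push_cast at h1 h2 ⊢; linarith
  have hfloor_q2 : ⌊((q' + 3 : ℕ) : ℝ) * rho⌋ = (p : ℤ) := by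
    have h1 : (0:ℝ) < (p:ℝ) / (q'+2:ℕ) := by positivity
    have h2 : (p:ℝ) / (q'+2:ℕ) < 1 := by
      rw [div_lt_one (by positivity)]
      exact_mod_cast hpq
    rw [Int.floor_eq_iff]
    have he : ((q' + 3 : ℕ) : ℝ) * rho = (p : ℝ) + (p:ℝ) / (q'+2:ℕ) := by
      rw [hrho]; field_simp; push_cast; ring
    constructor
    · rw [he]; push_cast at h1 h2 ⊢; linarith
    · rw [he]; push_cast at h1 h2 ⊢; linarith
  have hsum : ∑ j : Fin (q' + 2), F j =
      (∑ k ∈ Finset.Icc 1 (q' + 2 - 2),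
          ((⌊((k : ℝ) + 1) * p / (q'+2:ℕ)⌋ - ⌊(k : ℝ) * p / (q'+2:ℕ)⌋ : ℤ) : ℝ) *
            lam ^ k * mu ^ ⌊(k : ℝ) * p / (q'+2:ℕ)⌋) + lam ^ (q' + 2 - 1) * mu ^ (p - 1) := by
    rw [Fin.sum_univ_eq_sum_range, Finset.sum_range_succ, Finset.sum_range_succ]
    have hFq' : F q' = lam ^ (q' + 1) * mu ^ (p - 1) := by
      rw [hF]
      have e1 : ((q' : ℝ) + 1) = ((q' + 1 : ℕ) : ℝ) := by push_cast; ring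
      have e2 : ((q' : ℝ) + 2) = ((q' + 2 : ℕ) : ℝ) := by push_cast; ring
      simp only [e1, e2, hfloor_q, hfloor_q1]
      have : mu ^ ((p:ℤ) - 1) = mu ^ (p - 1) := by
        rw [show (p:ℤ) - 1 = ((p - 1 : ℕ) : ℤ) by omega, zpow_natCast]
      rw [this]
      push_cast
      ring
    have hFq1 : F (q' + 1) = 0 := by
      simp only [hF]
      have e1 : (((q' + 1 : ℕ) : ℝ) + 1) = ((q' + 2 : ℕ) : ℝ) := by push_cast; ring
      have e2 : (((q' + 1 : ℕ) : ℝ) + 2) = ((q' + 3 : ℕ) : ℝ) := by push_cast; ring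
      rw [e1, e2, hfloor_q, hfloor_q2]
      simp
    rw [hFq', hFq1]
    have hS : ∑ j ∈ Finset.range q', F j =
        ∑ k ∈ Finset.Icc 1 (q' + 2 - 2),
          ((⌊((k : ℝ) + 1) * p / (q'+2:ℕ)⌋ - ⌊(k : ℝ) * p / (q'+2:ℕ)⌋ : ℤ) : ℝ) *
            lam ^ k * mu ^ ⌊(k : ℝ) * p / (q'+2:ℕ)⌋ := by
      have : (q' + 2 - 2) = q' := by omega
      rw [this, ← Finset.Ico_add_one_right_eq_Icc, Finset.sum_Ico_eq_sum_range]
      simp only [Nat.add_sub_cancel]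
      apply Finset.sum_congr rfl
      intro j _
      simp only [hF]
      rw [show ((1 + j : ℕ) : ℝ) = (j : ℝ) + 1 by push_cast; ring]
      rw [show ((j : ℝ) + 1 + 1) * (p : ℝ) / ((q' + 2 : ℕ) : ℝ) = ((j : ℝ) + 2) * rho by
        rw [hrho]; ring]
      rw [show ((j : ℝ) + 1) * (p : ℝ) / ((q' + 2 : ℕ) : ℝ) = ((j : ℝ) + 1) * rho by
        rw [hrho]; ring]
      rw [show 1 + j = j + 1 from by omega]
    rw [hS]
    have : q' + 2 - 1 = q' + 1 := by omega
    rw [this]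
    ring
  rw [hsum, div_eq_mul_inv, mul_comm]
end

section
/- Let p, q be coprime positive integers with 0 < p/q < r_{λ,μ}. Then Φ_{p/q}(λ,μ,0) = (λ/(1−λ))·(1 + μσ⁻), where σ⁻ = (S + λ^q μ^{p−1})/(1 − λ^q μ^p) and S = Σ_{k=1}^{q−2} (⌊(k+1)p/q⌋ − ⌊kp/q⌋) λ^k μ^{⌊kp/q⌋}. -/
namespace HM14aux

lemma floor_nat_div (a b : ℕ) (hb : 0 < b) : ⌊(a : ℝ) / (b : ℝ)⌋ = ((a / b : ℕ) : ℤ) := by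
  have hb' : (0:ℝ) < b := by exact_mod_cast hb
  rw [Int.floor_eq_iff]
  constructor
  · rw [le_div_iff₀ hb']
    have h1 : ((a / b) * b : ℕ) ≤ a := Nat.div_mul_le_self a b
    exact_mod_cast h1
  · rw [div_lt_iff₀ hb']
    have h2 : a < (a / b + 1) * b := by
      have h3 := Nat.div_add_mod a b
      have h4 := Nat.mod_lt a hb
      calc a = b * (a / b) + a % b := (Nat.div_add_mod a b).symm
        _ < b * (a / b) + b := by omega
        _ = (a / b + 1) * b := by ring
    exact_mod_cast h2

lemma tail_geom {lam : ℝ} (h0 : 0 < lam) (h1 : lam < 1) (N : ℕ) :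
    (∑' k : ℕ, if N ≤ k then lam ^ k else 0) = lam ^ N * (1 - lam)⁻¹ := by
  have hinj : Function.Injective (fun k : ℕ => k + N) := add_left_injective N
  have hsupp : Function.support (fun k : ℕ => if N ≤ k then lam ^ k else 0) ⊆
      Set.range (fun k : ℕ => k + N) := by
    intro k hk
    by_cases h : N ≤ k
    · refine ⟨k - N, ?_⟩
      show k - N + N = k
      omega
    · exact absurd (if_neg h) hk
  rw [← Function.Injective.tsum_eq hinj hsupp]
  have heq : ∀ k : ℕ, (if N ≤ k + N then lam ^ (k + N) else 0) = lam ^ N * lam ^ k := by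
    intro k; rw [if_pos (Nat.le_add_left N k), pow_add]; ring
  simp only [heq]
  rw [tsum_mul_left, tsum_geometric_of_lt_one h0.le h1]

lemma lemI {p q : ℕ} (hp : 0 < p) (hpq : p < q) (hcop : Nat.Coprime p q)
    {i : ℕ} (hi1 : 1 ≤ i) (hip : i < p) :
    ((i * q / p) * p / q = i - 1) ∧ ((i * q / p + 1) * p / q = i) ∧
      1 ≤ i * q / p ∧ i * q / p ≤ q - 2 := by
  have hq : 0 < q := hp.trans hpq
  set k := i * q / p with hk
  have f1 : k * p ≤ i * q := Nat.div_mul_le_self _ _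
  have f2 : i * q < (k + 1) * p := by
    have h3 := Nat.div_add_mod (i * q) p
    have h4 := Nat.mod_lt (i * q) hp
    calc i * q = p * k + (i * q) % p := by rw [hk]; exact h3.symm
      _ < p * k + p := by omega
      _ = (k + 1) * p := by ring
  have f3 : k * p ≠ i * q := by
    intro he
    have hdvd : p ∣ i * q := ⟨k, by rw [← he, mul_comm]⟩
    have h5 := hcop.dvd_of_dvd_mul_right hdvd
    have h6 := Nat.le_of_dvd (by omega) h5
    omega
  have f1' : k * p < i * q := lt_of_le_of_ne f1 f3
  have ha : k * p / q = i - 1 := by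
    apply Nat.div_eq_of_lt_le
    · have e1 : (i - 1) * q + q = i * q := by
        have e : (i - 1) + 1 = i := by omega
        calc (i - 1) * q + q = ((i - 1) + 1) * q := by ring
          _ = i * q := by rw [e]
      have e2 : (k + 1) * p = k * p + p := by ring
      omega
    · have e : (i - 1 + 1) = i := by omega
      rw [e]; exact f1'
  have hb : (k + 1) * p / q = i := by
    apply Nat.div_eq_of_lt_le f2.le
    have e2 : (k + 1) * p = k * p + p := by ring
    have e3 : (i + 1) * q = i * q + q := by ring
    omega
  have hc1 : 1 ≤ k := by
    rw [hk, Nat.one_le_div_iff hp]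
    calc p ≤ q := hpq.le
      _ ≤ i * q := Nat.le_mul_of_pos_left q hi1
  have hc2 : k ≤ q - 2 := by
    have h7 : k ≤ (p - 1) * q / p :=
      Nat.div_le_div_right (Nat.mul_le_mul_right q (by omega : i ≤ p - 1))
    have h8 : (p - 1) * q / p < q - 1 := by
      rw [Nat.div_lt_iff_lt_mul hp]
      have e1 : (p - 1) * q + q = p * q := by
        have e : (p - 1) + 1 = p := by omega
        calc (p - 1) * q + q = ((p - 1) + 1) * q := by ring
          _ = p * q := by rw [e]
      have e2 : (q - 1) * p + p = q * p := by
        have e : (q - 1) + 1 = q := by omega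
        calc (q - 1) * p + p = ((q - 1) + 1) * p := by ring
          _ = q * p := by rw [e]
      have e3 : p * q = q * p := mul_comm p q
      omega
    have h9 : k < q - 1 := lt_of_le_of_lt h7 h8
    omega
  exact ⟨ha, hb, hc1, hc2⟩

lemma lemK {p q : ℕ} (hp : 0 < p) (hpq : p < q) (hcop : Nat.Coprime p q)
    {k : ℕ} (hk1 : 1 ≤ k) (hk2 : k ≤ q - 2) (hstep : (k + 1) * p / q = k * p / q + 1) :
    (k * p / q + 1) * q / p = k ∧ 1 ≤ k * p / q + 1 ∧ k * p / q + 1 < p := by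
  have hq : 0 < q := hp.trans hpq
  have g1 : k * p < (k * p / q + 1) * q := by
    have h1 : k * p / q < k * p / q + 1 := Nat.lt_succ_self _
    exact (Nat.div_lt_iff_lt_mul hq).mp h1
  have g2 : (k * p / q + 1) * q ≤ (k + 1) * p := by
    have h1 : k * p / q + 1 ≤ (k + 1) * p / q := by rw [hstep]
    exact (Nat.le_div_iff_mul_le hq).mp h1
  have g3 : (k * p / q + 1) * q ≠ (k + 1) * p := by
    intro he
    have hdvd : q ∣ (k + 1) * p := ⟨k * p / q + 1, by rw [← he, mul_comm]⟩
    have h5 := hcop.symm.dvd_of_dvd_mul_right hdvd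
    have h6 := Nat.le_of_dvd (by omega) h5
    omega
  have g2' : (k * p / q + 1) * q < (k + 1) * p := lt_of_le_of_ne g2 g3
  have hd : (k * p / q + 1) * q / p = k := Nat.div_eq_of_lt_le g1.le g2'
  have hi_lt : k * p / q + 1 < p := by
    rw [← hstep]
    have h2 : (k + 1) * p < p * q := by
      have h3 : k + 1 < q := by omega
      calc (k + 1) * p < q * p := Nat.mul_lt_mul_of_lt_of_le h3 (le_refl p) hp
        _ = p * q := mul_comm q p
    exact (Nat.div_lt_iff_lt_mul hq).mpr h2
  exact ⟨hd, Nat.le_add_left 1 _, hi_lt⟩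

lemma sumC (lam mu : ℝ) {p q : ℕ} (hp : 0 < p) (hpq : p < q) (hcop : Nat.Coprime p q) :
    ∑ i ∈ Finset.range p, mu ^ i * lam ^ (i * q / p)
      = 1 + ∑ k ∈ Finset.Icc 1 (q - 2),
          ((((k + 1) * p / q : ℕ) : ℝ) - ((k * p / q : ℕ) : ℝ)) * lam ^ k *
            mu ^ (k * p / q + 1) := by
  have hq : 0 < q := hp.trans hpq
  rw [Finset.range_eq_Ico, Finset.sum_eq_sum_Ico_succ_bot hp]
  simp only [pow_zero, Nat.zero_mul, Nat.zero_div, one_mul]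
  congr 1
  symm
  calc ∑ k ∈ Finset.Icc 1 (q - 2),
          ((((k + 1) * p / q : ℕ) : ℝ) - ((k * p / q : ℕ) : ℝ)) * lam ^ k *
            mu ^ (k * p / q + 1)
      = ∑ k ∈ (Finset.Icc 1 (q - 2)).filter (fun k => (k + 1) * p / q = k * p / q + 1),
          lam ^ k * mu ^ (k * p / q + 1) := by
        rw [Finset.sum_filter]
        apply Finset.sum_congr rfl
        intro k _
        by_cases h : (k + 1) * p / q = k * p / q + 1
        · rw [if_pos h, h]; push_cast; ring
        · rw [if_neg h]
          have hle : k * p / q ≤ (k + 1) * p / q :=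
            Nat.div_le_div_right (Nat.mul_le_mul_right p (Nat.le_succ k))
          have hub : (k + 1) * p / q ≤ k * p / q + 1 := by
            have h2 : (k + 1) * p ≤ k * p + q := by
              have h3 : p ≤ q := hpq.le
              calc (k + 1) * p = k * p + p := by ring
                _ ≤ k * p + q := by omega
            calc (k + 1) * p / q ≤ (k * p + q) / q := Nat.div_le_div_right h2
              _ = k * p / q + 1 := Nat.add_div_right _ hq
          have heq : (k + 1) * p / q = k * p / q := by omega
          rw [heq]; simp
    _ = ∑ i ∈ Finset.Ico 1 p, mu ^ i * lam ^ (i * q / p) := by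
        apply Finset.sum_nbij' (fun k => k * p / q + 1) (fun i => i * q / p)
        · intro k hk
          simp only [Finset.mem_filter, Finset.mem_Icc] at hk
          obtain ⟨⟨hk1, hk2⟩, hstep⟩ := hk
          obtain ⟨_, h1, h2⟩ := lemK hp hpq hcop hk1 hk2 hstep
          simp only [Finset.mem_Ico]; omega
        · intro i hi
          simp only [Finset.mem_Ico] at hi
          obtain ⟨ha, hb, hc1, hc2⟩ := lemI hp hpq hcop hi.1 hi.2
          simp only [Finset.mem_filter, Finset.mem_Icc]
          refine ⟨⟨hc1, hc2⟩, ?_⟩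
          rw [hb, ha]; omega
        · intro k hk
          simp only [Finset.mem_filter, Finset.mem_Icc] at hk
          exact (lemK hp hpq hcop hk.1.1 hk.1.2 hk.2).1
        · intro i hi
          simp only [Finset.mem_Ico] at hi
          have h1 := (lemI hp hpq hcop hi.1 hi.2).1
          omega
        · intro k hk
          simp only [Finset.mem_filter, Finset.mem_Icc] at hk
          have hinv := (lemK hp hpq hcop hk.1.1 hk.1.2 hk.2).1
          rw [hinv]; ring

end HM14aux

open HM14aux

theorem stmt14 (lam mu : ℝ) (p q : ℕ) (hlam0 : 0 < lam) (hlam1 : lam < 1) (hmu : 0 < mu)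
    (hp : 0 < p) (hq : 0 < q) (hcop : Nat.Coprime p q)
    (hr : (p : ℝ) / q < if lam * mu < 1 then 1 else -Real.log lam / Real.log mu) :
    PhiHM ((p : ℝ) / q) lam mu 0 =
      lam / (1 - lam) *
        (1 + mu * (((∑ k ∈ Finset.Icc 1 (q - 2),
            ((⌊((k : ℝ) + 1) * p / q⌋ - ⌊(k : ℝ) * p / q⌋ : ℤ) : ℝ) *
              lam ^ k * mu ^ ⌊(k : ℝ) * p / q⌋) + lam ^ q * mu ^ (p - 1)) /
          (1 - lam ^ q * mu ^ p))) := by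
  have hq0 : (0:ℝ) < q := by exact_mod_cast hq
  -- p < q
  have hpq : p < q := by
    by_cases hc : lam * mu < 1
    · rw [if_pos hc] at hr
      have h1 : (p:ℝ) < q := by rwa [div_lt_one hq0] at hr
      exact_mod_cast h1
    · rw [if_neg hc] at hr
      push_neg at hc
      have hmu1 : 1 < mu := by nlinarith
      have hlogmu : 0 < Real.log mu := Real.log_pos hmu1
      have h1 : -Real.log lam ≤ Real.log mu := by
        have h2 : 0 ≤ Real.log (lam * mu) := Real.log_nonneg hc
        rw [Real.log_mul (ne_of_gt hlam0) (ne_of_gt hmu)] at h2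
        linarith
      have h3 : (p:ℝ)/q < 1 := lt_of_lt_of_le hr (by rw [div_le_one hlogmu]; exact h1)
      have h4 : (p:ℝ) < q := by rwa [div_lt_one hq0] at h3
      exact_mod_cast h4
  -- lam^q * mu^p < 1
  have hr1 : lam ^ q * mu ^ p < 1 := by
    by_cases hc : lam * mu < 1
    · have hpq' : p + (q - p) = q := by omega
      have h1 : lam ^ q * mu ^ p = (lam * mu) ^ p * lam ^ (q - p) := by
        calc lam ^ q * mu ^ p = lam ^ (p + (q - p)) * mu ^ p := by rw [hpq']
          _ = (lam * mu) ^ p * lam ^ (q - p) := by rw [pow_add, mul_pow]; ring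
      rw [h1]
      have h2 : (lam * mu) ^ p < 1 := pow_lt_one₀ (by positivity) hc hp.ne'
      have h3 : lam ^ (q - p) < 1 := pow_lt_one₀ hlam0.le hlam1 (by omega)
      have h4 : (0:ℝ) ≤ (lam * mu) ^ p := by positivity
      have h5 : (0:ℝ) ≤ lam ^ (q - p) := by positivity
      nlinarith
    · rw [if_neg hc] at hr
      push_neg at hc
      have hmu1 : 1 < mu := by nlinarith
      have hlogmu : 0 < Real.log mu := Real.log_pos hmu1
      rw [div_lt_div_iff₀ hq0 hlogmu] at hr
      have h1 : Real.log (lam ^ q * mu ^ p) < 0 := by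
        rw [Real.log_mul (by positivity) (by positivity), Real.log_pow, Real.log_pow]
        nlinarith
      exact (Real.log_neg_iff (by positivity)).mp h1
  have hr0 : (0:ℝ) ≤ lam ^ q * mu ^ p := by positivity
  -- membership iff
  have hmem : ∀ k l : ℕ, l ∈ Finset.range (⌈(k:ℝ) * ((p:ℝ)/q) + 0⌉.toNat) ↔ l * q < k * p := by
    intro k l
    rw [Finset.mem_range, add_zero, Int.lt_toNat, Int.lt_ceil, mul_div_assoc', lt_div_iff₀ hq0]
    constructor <;> intro h
    · exact_mod_cast h
    · exact_mod_cast h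
  set f : ℕ → ℕ → ℝ := fun l k => if l * q < k * p then mu ^ l * lam ^ k else 0 with hfdef
  have hf_nonneg : ∀ l k, 0 ≤ f l k := by
    intro l k
    rw [hfdef]
    dsimp only
    split_ifs
    · positivity
    · exact le_refl 0
  have hsum_lam : Summable fun k : ℕ => lam ^ k :=
    summable_geometric_of_lt_one hlam0.le hlam1
  -- summability in k for each l
  have hsum_k : ∀ l, Summable (f l) := by
    intro l
    apply Summable.of_nonneg_of_le (hf_nonneg l) (fun k => ?_) (hsum_lam.mul_left (mu ^ l))
    rw [hfdef]; dsimp only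
    split_ifs
    · exact le_refl _
    · positivity
  -- value of the k-sum for each l
  have htsum_k : ∀ l, ∑' k, f l k = (lam * (1 - lam)⁻¹) * (mu ^ l * lam ^ (l * q / p)) := by
    intro l
    have hcond : ∀ k, (l * q < k * p) ↔ (l * q / p + 1 ≤ k) := by
      intro k
      rw [Nat.succ_le_iff, Nat.div_lt_iff_lt_mul hp]
    have heq : ∀ k, f l k = mu ^ l * (if l * q / p + 1 ≤ k then lam ^ k else 0) := by
      intro k
      rw [hfdef]; dsimp only
      by_cases h : l * q < k * p
      · rw [if_pos h, if_pos ((hcond k).mp h)]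
      · rw [if_neg h, if_neg (fun hh => h ((hcond k).mpr hh)), mul_zero]
    simp only [heq]
    rw [tsum_mul_left, tail_geom hlam0 hlam1, pow_succ]
    ring
  -- summability in l for each k (finite support)
  have hsum_l : ∀ k, Summable fun l => f l k := by
    intro k
    apply summable_of_ne_finset_zero (s := Finset.range (k * p))
    intro l hl
    rw [Finset.mem_range, not_lt] at hl
    rw [hfdef]; dsimp only
    apply if_neg
    intro hc
    have h1 : l ≤ l * q := Nat.le_mul_of_pos_right l hq
    omega
  -- the double sum over ℕ × Fin p for h l = mu^l * lam^(l*q/p)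
  haveI : NeZero p := ⟨hp.ne'⟩
  set r : ℝ := lam ^ q * mu ^ p with hrdef
  set h : ℕ → ℝ := fun l => mu ^ l * lam ^ (l * q / p) with hhdef
  have hcomp : ∀ x : ℕ × Fin p, h ((Nat.divModEquiv p).symm x)
      = r ^ x.1 * (mu ^ (x.2 : ℕ) * lam ^ ((x.2 : ℕ) * q / p)) := by
    rintro ⟨j, i⟩
    show h (j * p + (i : ℕ)) = _
    have hdiv : (j * p + (i : ℕ)) * q / p = (i : ℕ) * q / p + j * q := by
      have e : (j * p + (i : ℕ)) * q = (i : ℕ) * q + (j * q) * p := by ring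
      rw [e, Nat.add_mul_div_right _ _ hp]
    rw [hhdef]; dsimp only
    rw [hdiv]
    have e1 : mu ^ (j * p + (i : ℕ)) = (mu ^ p) ^ j * mu ^ (i : ℕ) := by
      rw [pow_add, pow_mul']
    have e2 : lam ^ ((i : ℕ) * q / p + j * q) = lam ^ ((i : ℕ) * q / p) * (lam ^ q) ^ j := by
      rw [pow_add, pow_mul']
    rw [e1, e2, hrdef, mul_pow]
    ring
  have hg_nonneg : ∀ x : ℕ × Fin p, 0 ≤ h ((Nat.divModEquiv p).symm x) := by
    intro x; rw [hhdef]; positivity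
  have hr_sum : Summable fun j : ℕ => r ^ j := summable_geometric_of_lt_one hr0 hr1
  have hsum2 : Summable (fun x : ℕ × Fin p => h ((Nat.divModEquiv p).symm x)) := by
    rw [summable_prod_of_nonneg hg_nonneg]
    constructor
    · intro j; exact Summable.of_finite
    · have e3 : ∀ j : ℕ, (∑' i : Fin p, h ((Nat.divModEquiv p).symm (j, i)))
          = r ^ j * ∑ i : Fin p, (mu ^ (i : ℕ) * lam ^ ((i : ℕ) * q / p)) := by
        intro j
        rw [tsum_fintype]
        rw [Finset.mul_sum]
        apply Finset.sum_congr rfl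
        intro i _
        exact hcomp (j, i)
      simp only [e3]
      exact hr_sum.mul_right _
  have hsum_h : Summable h := ((Nat.divModEquiv p).symm.summable_iff).mp hsum2
  set C : ℝ := ∑ i ∈ Finset.range p, mu ^ i * lam ^ (i * q / p) with hCdef
  have htsum_h : ∑' l, h l = C * (1 - r)⁻¹ := by
    rw [← (Nat.divModEquiv p).symm.tsum_eq h]
    rw [Summable.tsum_prod' hsum2 (fun j => Summable.of_finite)]
    have e3 : ∀ j : ℕ, (∑' i : Fin p, h ((Nat.divModEquiv p).symm (j, i))) = r ^ j * C := by
      intro j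
      rw [tsum_fintype]
      rw [hCdef, ← Fin.sum_univ_eq_sum_range (fun i => mu ^ i * lam ^ (i * q / p)) p]
      rw [Finset.mul_sum]
      apply Finset.sum_congr rfl
      intro i _
      exact hcomp (j, i)
    calc (∑' j : ℕ, ∑' i : Fin p, h ((Nat.divModEquiv p).symm (j, i)))
        = ∑' j : ℕ, r ^ j * C := by exact tsum_congr e3
      _ = (∑' j : ℕ, r ^ j) * C := tsum_mul_right
      _ = (1 - r)⁻¹ * C := by rw [tsum_geometric_of_lt_one hr0 hr1]
      _ = C * (1 - r)⁻¹ := mul_comm _ _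
  -- summability of the double family
  have hsumF : Summable (fun x : ℕ × ℕ => f x.1 x.2) := by
    rw [summable_prod_of_nonneg (f := fun x : ℕ × ℕ => f x.1 x.2) (fun x => hf_nonneg x.1 x.2)]
    refine ⟨fun l => hsum_k l, ?_⟩
    have e4 : ∀ l : ℕ, (∑' k, f l k) = (lam * (1 - lam)⁻¹) * h l := by
      intro l; rw [htsum_k l]
    simp only [e4]
    exact hsum_h.mul_left _
  -- main chain
  have step1 : PhiHM ((p:ℝ)/q) lam mu 0 = ∑' k : ℕ, ∑' l : ℕ, f l k := by
    rw [PhiHM]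
    apply tsum_congr
    intro k
    rw [tsum_eq_sum (s := Finset.range (⌈(k:ℝ) * ((p:ℝ)/q) + 0⌉.toNat))
      (fun l hl => by
        rw [hfdef]; dsimp only
        exact if_neg (fun hc => hl ((hmem k l).mpr hc)))]
    apply Finset.sum_congr rfl
    intro l hl
    rw [hfdef]; dsimp only
    rw [if_pos ((hmem k l).mp hl)]
    ring
  have step2 : (∑' k : ℕ, ∑' l : ℕ, f l k) = ∑' l : ℕ, ∑' k : ℕ, f l k :=
    Summable.tsum_comm' hsumF hsum_k hsum_l
  have step3 : (∑' l : ℕ, ∑' k : ℕ, f l k) = (lam * (1 - lam)⁻¹) * (C * (1 - r)⁻¹) := by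
    calc (∑' l : ℕ, ∑' k : ℕ, f l k) = ∑' l : ℕ, (lam * (1 - lam)⁻¹) * h l :=
          tsum_congr (fun l => htsum_k l)
      _ = (lam * (1 - lam)⁻¹) * ∑' l, h l := tsum_mul_left
      _ = (lam * (1 - lam)⁻¹) * (C * (1 - r)⁻¹) := by rw [htsum_h]
  -- rewrite the statement's sum
  have hfloor : ∀ k : ℕ, ⌊(k : ℝ) * p / q⌋ = ((k * p / q : ℕ) : ℤ) := by
    intro k
    have e : (k : ℝ) * p / q = ((k * p : ℕ) : ℝ) / q := by push_cast; ring
    rw [e, floor_nat_div _ _ hq]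
  have hfloor1 : ∀ k : ℕ, ⌊((k : ℝ) + 1) * p / q⌋ = (((k + 1) * p / q : ℕ) : ℤ) := by
    intro k
    have e : ((k : ℝ) + 1) * p / q = (((k + 1) * p : ℕ) : ℝ) / q := by push_cast; ring
    rw [e, floor_nat_div _ _ hq]
  have hS : mu * (∑ k ∈ Finset.Icc 1 (q - 2),
        ((⌊((k : ℝ) + 1) * p / q⌋ - ⌊(k : ℝ) * p / q⌋ : ℤ) : ℝ) *
          lam ^ k * mu ^ ⌊(k : ℝ) * p / q⌋)
      = ∑ k ∈ Finset.Icc 1 (q - 2),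
          ((((k + 1) * p / q : ℕ) : ℝ) - ((k * p / q : ℕ) : ℝ)) * lam ^ k *
            mu ^ (k * p / q + 1) := by
    rw [Finset.mul_sum]
    apply Finset.sum_congr rfl
    intro k _
    rw [hfloor k, hfloor1 k, zpow_natCast, Int.cast_sub, Int.cast_natCast, Int.cast_natCast,
      pow_succ]
    ring
  have hC : C = 1 + mu * (∑ k ∈ Finset.Icc 1 (q - 2),
        ((⌊((k : ℝ) + 1) * p / q⌋ - ⌊(k : ℝ) * p / q⌋ : ℤ) : ℝ) *
          lam ^ k * mu ^ ⌊(k : ℝ) * p / q⌋) := by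
    rw [hS, hCdef]
    exact sumC lam mu hp hpq hcop
  -- final algebra
  rw [step1, step2, step3, hC]
  have hrne : (1:ℝ) - r ≠ 0 := by
    intro hcon
    have h1 : r = 1 := by linarith
    linarith
  have hlamne : (1:ℝ) - lam ≠ 0 := by
    intro hcon
    have h1 : lam = 1 := by linarith
    linarith
  have hmup : mu ^ p = mu * mu ^ (p - 1) := by
    rw [← pow_succ']
    congr 1
    omega
  rw [hrdef] at hrne ⊢
  rw [hmup] at hrne ⊢
  set S := (∑ k ∈ Finset.Icc 1 (q - 2),
      ((⌊((k : ℝ) + 1) * p / q⌋ - ⌊(k : ℝ) * p / q⌋ : ℤ) : ℝ) *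
        lam ^ k * mu ^ ⌊(k : ℝ) * p / q⌋) with hSdef
  field_simp
  have hX : (1 - mu * mu ^ (p - 1) * lam ^ q) * (1 - mu * mu ^ (p - 1) * lam ^ q)⁻¹ = 1 :=
    mul_inv_cancel₀ (by intro h0; apply hrne; linear_combination h0)
  linear_combination hX
end

section
/- Let (x_k)_{k≥0} be the forward orbit of x under the lift F. For all non-negative integers l, n: x_{l+n} = ⌊x_{l+n}⌋ + λ^n μ^{⌊x_{l+n}⌋−⌊x_l⌋}({x_l} − (1−δ)/λ) + (1−δ)/λ + Σ_{k=0}^{n−1} λ^k μ^{⌊x_{l+n}⌋−⌊x_{l+n−k}⌋}((λ+δ−1)/λ + ⌊x_{l+n−(k+1)}⌋ − ⌊x_{l+n−k}⌋). -/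
/-- The lift F of the 2-interval piecewise affine map. -/
noncomputable def liftF (lam mu del : ℝ) (x : ℝ) : ℝ :=
  if Int.fract x < (1 - del) / lam then lam * x + del + (1 - lam) * (⌊x⌋ : ℝ)
  else mu * (lam * x + del - 1) + 1 + (1 - lam * mu) * (⌊x⌋ : ℝ)

lemma liftF_oneStep (lam mu del : ℝ) (hlam0 : 0 < lam) (hlam1 : lam < 1) (hmu : 0 < mu)
    (hdel1 : 1 - lam < del)
    (hdel2 : del < if lam * mu < 1 then 1 else (mu - lam * mu) / (mu - 1)) (y : ℝ) :
    liftF lam mu del y = (⌊y⌋ : ℝ) + 1 +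
      lam * mu ^ (⌊liftF lam mu del y⌋ - ⌊y⌋) * (Int.fract y - (1 - del) / lam) := by
  have hdel0 : 0 < del := by linarith
  have hmu0 : mu ≠ 0 := ne_of_gt hmu
  have hlamne : lam ≠ 0 := ne_of_gt hlam0
  have hdellt1 : del < 1 := by
    split_ifs at hdel2 with h
    · exact hdel2
    · push_neg at h
      have hmu1 : 1 < mu := by nlinarith
      calc del < (mu - lam*mu)/(mu-1) := hdel2
        _ ≤ 1 := by rw [div_le_one (by linarith)]; nlinarith
  rw [liftF]
  split_ifs with hfr
  · have h1 : lam * y + del + (1-lam)*(⌊y⌋:ℝ) = (⌊y⌋:ℝ) + (lam * Int.fract y + del) := by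
      rw [Int.fract]; ring
    have hlt : lam * Int.fract y < 1 - del := by
      have := (lt_div_iff₀ hlam0).mp hfr
      linarith
    have h0 : 0 ≤ lam * Int.fract y + del := by
      have := Int.fract_nonneg y; nlinarith
    have hfloor : ⌊lam * y + del + (1-lam)*(⌊y⌋:ℝ)⌋ = ⌊y⌋ := by
      rw [h1, Int.floor_intCast_add, Int.floor_eq_zero_iff.mpr ⟨h0, by linarith⟩, add_zero]
    rw [hfloor, sub_self, zpow_zero]
    rw [h1]; field_simp; ring
  · push_neg at hfr
    have hge : 1 - del ≤ lam * Int.fract y := by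
      have := (div_le_iff₀ hlam0).mp hfr
      linarith
    have h1 : mu * (lam * y + del - 1) + 1 + (1 - lam*mu)*(⌊y⌋:ℝ)
        = (⌊y⌋:ℝ) + 1 + mu * (lam * Int.fract y + del - 1) := by
      rw [Int.fract]; ring
    have h0 : 0 ≤ mu * (lam * Int.fract y + del - 1) := by nlinarith
    have hfr1 : Int.fract y < 1 := Int.fract_lt_one y
    have hlt1 : mu * (lam * Int.fract y + del - 1) < 1 := by
      split_ifs at hdel2 with h
      · nlinarith
      · push_neg at h
        have hmu1 : 1 < mu := by nlinarith
        have hd : lam + del - 1 < (1-lam)/(mu-1) := by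
          have := hdel2
          rw [lt_div_iff₀ (by linarith : (0:ℝ) < mu - 1)]
          rw [lt_div_iff₀ (by linarith : (0:ℝ) < mu - 1)] at this
          nlinarith
        have : mu * (lam + del - 1) < mu * ((1-lam)/(mu-1)) := by
          apply mul_lt_mul_of_pos_left hd hmu
        have hle1 : mu * ((1-lam)/(mu-1)) ≤ 1 := by
          rw [← mul_div_assoc, div_le_one (by linarith : (0:ℝ) < mu - 1)]
          nlinarith
        have hstrict : lam * Int.fract y < lam := by nlinarith
        nlinarith
    have hfloor : ⌊mu * (lam * y + del - 1) + 1 + (1 - lam*mu)*(⌊y⌋:ℝ)⌋ = ⌊y⌋ + 1 := by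
      rw [h1, show (⌊y⌋:ℝ) + 1 + mu * (lam * Int.fract y + del - 1)
          = ((⌊y⌋+1 : ℤ):ℝ) + mu * (lam * Int.fract y + del - 1) by push_cast; ring,
        Int.floor_intCast_add, Int.floor_eq_zero_iff.mpr ⟨h0, hlt1⟩, add_zero]
    rw [hfloor, show (⌊y⌋ + 1 : ℤ) - ⌊y⌋ = 1 by ring, zpow_one]
    rw [h1]; field_simp; ring

theorem stmt16 (lam mu del : ℝ) (hlam0 : 0 < lam) (hlam1 : lam < 1) (hmu : 0 < mu)
    (hdel1 : 1 - lam < del)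
    (hdel2 : del < if lam * mu < 1 then 1 else (mu - lam * mu) / (mu - 1))
    (x : ℝ) :
    ∀ l n : ℕ,
      (liftF lam mu del)^[l + n] x =
        (⌊(liftF lam mu del)^[l + n] x⌋ : ℝ) +
          lam ^ n * mu ^ (⌊(liftF lam mu del)^[l + n] x⌋ - ⌊(liftF lam mu del)^[l] x⌋) *
            (Int.fract ((liftF lam mu del)^[l] x) - (1 - del) / lam) +
          (1 - del) / lam +
          ∑ k ∈ Finset.range n,
            lam ^ k *
              mu ^ (⌊(liftF lam mu del)^[l + n] x⌋ - ⌊(liftF lam mu del)^[l + n - k] x⌋) *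
              ((lam + del - 1) / lam +
                ((⌊(liftF lam mu del)^[l + n - (k + 1)] x⌋ : ℝ) -
                  (⌊(liftF lam mu del)^[l + n - k] x⌋ : ℝ))) := by
  have key := liftF_oneStep lam mu del hlam0 hlam1 hmu hdel1 hdel2
  set g := liftF lam mu del with hg
  have hmu0 : mu ≠ 0 := ne_of_gt hmu
  have hlamne : lam ≠ 0 := ne_of_gt hlam0
  intro l n
  induction n with
  | zero =>
    simp only [Nat.add_zero, pow_zero, sub_self, zpow_zero, Finset.range_zero,
      Finset.sum_empty, Int.fract, add_zero, one_mul, mul_one]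
    ring
  | succ n ih =>
    have hit : g^[l + (n+1)] x = g (g^[l+n] x) := Function.iterate_succ_apply' g (l+n) x
    -- fractional part of the n-th point, from ih
    have hfr : Int.fract (g^[l+n] x) =
        lam ^ n * mu ^ (⌊g^[l+n] x⌋ - ⌊g^[l] x⌋) *
          (Int.fract (g^[l] x) - (1 - del) / lam) + (1 - del) / lam +
        ∑ k ∈ Finset.range n,
            lam ^ k * mu ^ (⌊g^[l+n] x⌋ - ⌊g^[l+n-k] x⌋) *
              ((lam + del - 1) / lam +
                ((⌊g^[l+n-(k+1)] x⌋ : ℝ) - (⌊g^[l+n-k] x⌋ : ℝ))) := by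
      rw [Int.fract]
      nth_rewrite 1 [ih]
      ring
    -- split off the k = 0 term of the target sum and shift
    have key' := key (g^[l+n] x)
    rw [← hit] at key'
    conv_lhs => rw [key', hfr]
    rw [Finset.sum_range_succ']
    have hshift : ∀ k ∈ Finset.range n,
        lam ^ (k+1) * mu ^ (⌊g^[l+(n+1)] x⌋ - ⌊g^[l+(n+1)-(k+1)] x⌋) *
          ((lam + del - 1) / lam +
            ((⌊g^[l+(n+1)-(k+1+1)] x⌋ : ℝ) - (⌊g^[l+(n+1)-(k+1)] x⌋ : ℝ)))
        = lam * mu ^ (⌊g^[l+(n+1)] x⌋ - ⌊g^[l+n] x⌋) *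
          (lam ^ k * mu ^ (⌊g^[l+n] x⌋ - ⌊g^[l+n-k] x⌋) *
            ((lam + del - 1) / lam +
              ((⌊g^[l+n-(k+1)] x⌋ : ℝ) - (⌊g^[l+n-k] x⌋ : ℝ)))) := by
      intro k hk
      have hk' : k < n := Finset.mem_range.mp hk
      have e1 : l+(n+1)-(k+1) = l+n-k := by omega
      have e2 : l+(n+1)-(k+1+1) = l+n-(k+1) := by omega
      rw [e1, e2,
        show ⌊g^[l+(n+1)] x⌋ - ⌊g^[l+n-k] x⌋
          = (⌊g^[l+(n+1)] x⌋ - ⌊g^[l+n] x⌋) + (⌊g^[l+n] x⌋ - ⌊g^[l+n-k] x⌋) by ring,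
        zpow_add₀ hmu0]
      ring
    rw [Finset.sum_congr rfl hshift, ← Finset.mul_sum]
    have hz : mu ^ (⌊g^[l+(n+1)] x⌋ - ⌊g^[l] x⌋)
        = mu ^ (⌊g^[l+(n+1)] x⌋ - ⌊g^[l+n] x⌋) * mu ^ (⌊g^[l+n] x⌋ - ⌊g^[l] x⌋) := by
      rw [← zpow_add₀ hmu0]; ring_nf
    have e3 : l+(n+1)-0 = l+(n+1) := by omega
    have e4 : l+(n+1)-(0+1) = l+n := by omega
    rw [hz, e3, e4, sub_self, zpow_zero]
    field_simp
    ring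
end

section
/- Let ρ be irrational with 0 < ρ < r_{λ,μ} and δ = δ(λ,μ,ρ). Then Σ_{l≥1} λ^{l−1} μ^{⌊lρ⌋} = (1 + (μ−1)σ)/(1−λ) and δ − μ(λ+δ−1) = (1−λ)/(1+(μ−1)σ); consequently (δ − μ(λ+δ−1)) Σ_{l≥1} λ^{l−1} μ^{⌊lρ⌋} = 1. -/
theorem stmt18 (lam mu rho : ℝ) (hlam0 : 0 < lam) (hlam1 : lam < 1) (hmu : 0 < mu)
    (hrho0 : 0 < rho)
    (hrho1 : rho < if lam * mu < 1 then 1 else -Real.log lam / Real.log mu)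
    (hirr : Irrational rho) :
    (∑' l : ℕ, lam ^ l * mu ^ ⌊((l : ℝ) + 1) * rho⌋) =
        (1 + (mu - 1) * sigmaFn lam mu rho) / (1 - lam) ∧
    deltaFn lam mu rho - mu * (lam + deltaFn lam mu rho - 1) =
        (1 - lam) / (1 + (mu - 1) * sigmaFn lam mu rho) ∧
    (deltaFn lam mu rho - mu * (lam + deltaFn lam mu rho - 1)) *
        (∑' l : ℕ, lam ^ l * mu ^ ⌊((l : ℝ) + 1) * rho⌋) = 1 := by
  -- ρ < 1 in all cases
  have hrho1' : rho < 1 := by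
    rcases lt_or_ge (lam * mu) 1 with h | h
    · simpa [h] using hrho1
    · rw [if_neg (not_lt.2 h)] at hrho1
      have hmu1 : 1 < mu := by nlinarith
      have hlogmu : 0 < Real.log mu := Real.log_pos hmu1
      have hsum : Real.log lam + Real.log mu = Real.log (lam * mu) :=
        (Real.log_mul (ne_of_gt hlam0) (ne_of_gt hmu)).symm
      have h1 : (0:ℝ) ≤ Real.log (lam * mu) := Real.log_nonneg h
      have : -Real.log lam ≤ Real.log mu := by linarith
      calc rho < -Real.log lam / Real.log mu := hrho1
        _ ≤ 1 := by rw [div_le_one hlogmu]; exact this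
  -- key geometric bound
  set ν : ℝ := max mu 1 with hν
  have hν1 : 1 ≤ ν := le_max_right _ _
  have hν0 : 0 < ν := lt_of_lt_of_le one_pos hν1
  set P : ℝ := ν ^ rho with hP
  have hP0 : 0 < P := Real.rpow_pos_of_pos hν0 _
  have hP1 : 1 ≤ P := Real.one_le_rpow hν1 hrho0.le
  have hq : lam * P < 1 := by
    rcases le_or_gt mu 1 with hm | hm
    · have : ν = 1 := max_eq_right hm
      rw [hP, this, Real.one_rpow]; linarith
    · have hνμ : ν = mu := max_eq_left hm.le
      have hlogmu : 0 < Real.log mu := Real.log_pos hm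
      have hkey : rho * Real.log mu < -Real.log lam := by
        rcases lt_or_ge (lam * mu) 1 with h | h
        · have hsum : Real.log lam + Real.log mu = Real.log (lam * mu) :=
            (Real.log_mul (ne_of_gt hlam0) (ne_of_gt hmu)).symm
          have h1 : Real.log (lam * mu) < 0 :=
            Real.log_neg (by positivity) h
          nlinarith
        · rw [if_neg (not_lt.2 h)] at hrho1
          calc rho * Real.log mu < (-Real.log lam / Real.log mu) * Real.log mu := by
                exact mul_lt_mul_of_pos_right hrho1 hlogmu
            _ = -Real.log lam := by field_simp
      have h2 : P < lam⁻¹ := by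
        have hinv : lam⁻¹ = Real.exp (-Real.log lam) := by
          rw [← Real.log_inv, Real.exp_log (by positivity)]
        rw [hP, hνμ, Real.rpow_def_of_pos hmu, hinv]
        exact Real.exp_lt_exp.2 (by linarith [hkey])
      calc lam * P < lam * lam⁻¹ := by exact mul_lt_mul_of_pos_left h2 hlam0
        _ = 1 := mul_inv_cancel₀ (ne_of_gt hlam0)
  -- floor sequence
  set a : ℕ → ℤ := fun l => ⌊((l : ℝ) + 1) * rho⌋ with ha
  have ha0 : ∀ l, 0 ≤ a l := fun l => Int.floor_nonneg.2 (by positivity)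
  have haρ : ∀ l : ℕ, (a l : ℝ) ≤ ((l : ℝ) + 1) * rho := fun l => Int.floor_le _
  have hstep : ∀ l, a (l + 1) = a l ∨ a (l + 1) = a l + 1 := by
    intro l
    have h1 : a l ≤ a (l + 1) := Int.floor_le_floor (by push_cast; nlinarith)
    have h2 : a (l + 1) ≤ a l + 1 := by
      have hle : (((l + 1 : ℕ) : ℝ) + 1) * rho ≤ (((l : ℝ) + 1) * rho) + 1 := by
        push_cast; nlinarith
      calc a (l + 1) ≤ ⌊((l : ℝ) + 1) * rho + 1⌋ := Int.floor_le_floor hle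
        _ = a l + 1 := Int.floor_add_one _
    omega
  set f : ℕ → ℝ := fun l => lam ^ l * mu ^ a l with hf
  set s : ℕ → ℝ := fun k => ((a (k + 1) - a k : ℤ) : ℝ) * lam ^ (k + 1) * mu ^ a k with hs
  have hσ : sigmaFn lam mu rho = ∑' k, s k := by
    unfold sigmaFn
    apply tsum_congr
    intro k
    have e1 : (((k + 1 : ℕ) : ℝ) + 1) = (k : ℝ) + 2 := by push_cast; ring
    simp only [hs, ha, e1]
  have hfpos : ∀ l, 0 < f l := fun l =>
    mul_pos (pow_pos hlam0 _) (zpow_pos hmu _)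
  have hfle : ∀ l, f l ≤ P * (lam * P) ^ l := by
    intro l
    obtain ⟨n, hn⟩ := Int.eq_ofNat_of_zero_le (ha0 l)
    have h1 : mu ^ a l ≤ P ^ (l + 1) := by
      have e2 : mu ^ a l = mu ^ n := by rw [hn, zpow_natCast]
      have e3 : mu ^ n ≤ ν ^ n := pow_le_pow_left₀ hmu.le (le_max_left _ _) n
      have e4 : (ν : ℝ) ^ n = ν ^ ((n : ℝ)) := (Real.rpow_natCast ν n).symm
      have e5 : ν ^ ((n : ℝ)) ≤ ν ^ (((l : ℝ) + 1) * rho) := by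
        apply Real.rpow_le_rpow_of_exponent_le hν1
        have := haρ l
        rw [hn] at this; push_cast at this ⊢; linarith
      have e6 : ν ^ (((l : ℝ) + 1) * rho) = P ^ (l + 1) := by
        rw [hP, ← Real.rpow_natCast (ν ^ rho) (l + 1), ← Real.rpow_mul hν0.le]
        push_cast; ring_nf
      rw [e2]; calc mu ^ n ≤ ν ^ n := e3
        _ = ν ^ ((n : ℝ)) := e4
        _ ≤ ν ^ (((l : ℝ) + 1) * rho) := e5
        _ = P ^ (l + 1) := e6
    calc f l = lam ^ l * mu ^ a l := rfl
      _ ≤ lam ^ l * P ^ (l + 1) := by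
          exact mul_le_mul_of_nonneg_left h1 (pow_nonneg hlam0.le _)
      _ = P * (lam * P) ^ l := by rw [mul_pow, pow_succ]; ring
  have hgeo : Summable (fun l : ℕ => P * (lam * P) ^ l) :=
    (summable_geometric_of_lt_one (by positivity) hq).mul_left P
  have hfsum : Summable f := hgeo.of_nonneg_of_le (fun l => (hfpos l).le) hfle
  have hs0 : ∀ k, 0 ≤ s k := by
    intro k
    have hd0 : (0:ℝ) ≤ ((a (k + 1) - a k : ℤ) : ℝ) := by
      rcases hstep k with h | h <;> simp [h]
    exact mul_nonneg (mul_nonneg hd0 (pow_nonneg hlam0.le _)) (zpow_pos hmu _).le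
  have hsle : ∀ k, s k ≤ lam * (P * (lam * P) ^ k) := by
    intro k
    have hd : ((a (k + 1) - a k : ℤ) : ℝ) ≤ 1 := by
      rcases hstep k with h | h <;> simp [h]
    have heq : s k = ((a (k + 1) - a k : ℤ) : ℝ) * (lam * f k) := by
      simp only [hs, hf, pow_succ]; ring
    have h2 : lam * f k ≤ lam * (P * (lam * P) ^ k) :=
      mul_le_mul_of_nonneg_left (hfle k) hlam0.le
    have h3 : (0:ℝ) ≤ lam * f k := by positivity
    calc s k = ((a (k + 1) - a k : ℤ) : ℝ) * (lam * f k) := heq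
      _ ≤ 1 * (lam * f k) := mul_le_mul_of_nonneg_right hd h3
      _ = lam * f k := one_mul _
      _ ≤ lam * (P * (lam * P) ^ k) := h2
  have hssum : Summable s :=
    (hgeo.mul_left lam).of_nonneg_of_le hs0 hsle
  have hrec : ∀ l, f (l + 1) = lam * f l + (mu - 1) * s l := by
    intro l
    have hd : mu ^ a (l + 1) = mu ^ a l * (1 + (mu - 1) * ((a (l + 1) - a l : ℤ) : ℝ)) := by
      rcases hstep l with h | h
      · rw [h]; simp
      · rw [h, zpow_add_one₀ (ne_of_gt hmu)]; push_cast; ring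
    show lam ^ (l + 1) * mu ^ a (l + 1) =
      lam * (lam ^ l * mu ^ a l) +
        (mu - 1) * (((a (l + 1) - a l : ℤ) : ℝ) * lam ^ (l + 1) * mu ^ a l)
    rw [hd, pow_succ]; ring
  have hS := Summable.tsum_eq_zero_add hfsum
  have ha00 : a 0 = 0 := by
    rw [ha]
    apply Int.floor_eq_zero_iff.2
    constructor
    · positivity
    · push_cast; nlinarith
  have hf0 : f 0 = 1 := by simp [hf, ha00]
  have htail : (∑' n : ℕ, f (n + 1)) =
      lam * (∑' n : ℕ, f n) + (mu - 1) * (∑' n : ℕ, s n) := by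
    calc (∑' n : ℕ, f (n + 1)) = ∑' n : ℕ, (lam * f n + (mu - 1) * s n) :=
          tsum_congr (fun n => hrec n)
      _ = (∑' n : ℕ, lam * f n) + ∑' n : ℕ, (mu - 1) * s n :=
          Summable.tsum_add (hfsum.mul_left lam) (hssum.mul_left (mu - 1))
      _ = lam * (∑' n : ℕ, f n) + (mu - 1) * (∑' n : ℕ, s n) := by
          rw [tsum_mul_left, tsum_mul_left]
  have hSeq : (∑' l : ℕ, lam ^ l * mu ^ ⌊((l : ℝ) + 1) * rho⌋) = ∑' n : ℕ, f n :=
    tsum_congr (fun l => rfl)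
  have hmain : (1 - lam) * (∑' n : ℕ, f n) = 1 + (mu - 1) * sigmaFn lam mu rho := by
    rw [hσ]
    have := hS
    rw [hf0, htail] at this
    linarith
  have hSpos : 0 < ∑' n : ℕ, f n := Summable.tsum_pos hfsum (fun l => (hfpos l).le) 0 (hfpos 0)
  have hlam1' : (0:ℝ) < 1 - lam := by linarith
  have hD : 0 < 1 + (mu - 1) * sigmaFn lam mu rho := by
    rw [← hmain]; positivity
  have hDne : 1 + (mu - 1) * sigmaFn lam mu rho ≠ 0 := ne_of_gt hD
  have goal1 : (∑' l : ℕ, lam ^ l * mu ^ ⌊((l : ℝ) + 1) * rho⌋) =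
      (1 + (mu - 1) * sigmaFn lam mu rho) / (1 - lam) := by
    rw [hSeq, eq_div_iff (ne_of_gt hlam1')]
    linarith [hmain]
  have goal2 : deltaFn lam mu rho - mu * (lam + deltaFn lam mu rho - 1) =
      (1 - lam) / (1 + (mu - 1) * sigmaFn lam mu rho) := by
    unfold deltaFn
    rw [eq_div_iff hDne]
    have hc := div_mul_cancel₀ ((1 - lam) * (1 + mu * sigmaFn lam mu rho)) hDne
    linear_combination (1 - mu) * hc
  refine ⟨goal1, goal2, ?_⟩
  rw [goal1, goal2]
  field_simp
end
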